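/- arXiv:1409.2835 — 10 statements merged into one kernel-verified Lean document; each statement's English description precedes it below -/
import Mathlib

section
/- If a standard interference mapping J : (ℝ≥0)^M → (ℝ>0)^M has a fixed point, then the fixed point is unique. -/
lemma interference_fp_le (M : ℕ)
    (J : (Fin M → ℝ) → (Fin M → ℝ))
    (hscal : ∀ x : Fin M → ℝ, (∀ i, 0 ≤ x i) → ∀ α : ℝ, 1 < α →
      ∀ i, J (fun j => α * x j) i < α * J x i)
    (hmono : ∀ x y : Fin M → ℝ, (∀ i, 0 ≤ y i) → (∀ i, y i ≤ x i) →
      ∀ i, J y i ≤ J x i)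
    (x₁ x₂ : Fin M → ℝ)
    (hx₁ : ∀ i, 0 < x₁ i) (hx₂ : ∀ i, 0 < x₂ i)
    (hf₁ : J x₁ = x₁) (hf₂ : J x₂ = x₂) :
    ∀ i, x₁ i ≤ x₂ i := by
  rcases Nat.eq_zero_or_pos M with hM | hM
  · subst hM; exact fun i => i.elim0
  have : Nonempty (Fin M) := ⟨⟨0, hM⟩⟩
  obtain ⟨j, -, hmax⟩ := Finset.exists_max_image (Finset.univ)
    (fun i => x₁ i / x₂ i) ⟨this.some, Finset.mem_univ _⟩
  set α := x₁ j / x₂ j with hα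
  have key : ∀ i, x₁ i ≤ α * x₂ i := fun i =>
    (div_le_iff₀ (hx₂ i)).mp (hmax i (Finset.mem_univ i))
  rcases le_or_gt α 1 with h1 | h1
  · intro i
    calc x₁ i ≤ α * x₂ i := key i
      _ ≤ 1 * x₂ i := by nlinarith [hx₂ i]
      _ = x₂ i := one_mul _
  · exfalso
    have h2 : J x₁ j ≤ J (fun k => α * x₂ k) j :=
      hmono _ x₁ (fun i => (hx₁ i).le) key j
    have h3 : J (fun k => α * x₂ k) j < α * J x₂ j :=
      hscal x₂ (fun i => (hx₂ i).le) α h1 j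
    rw [hf₁] at h2
    rw [hf₂] at h3
    have : α * x₂ j = x₁ j := div_mul_cancel₀ _ (hx₂ j).ne'
    linarith [lt_of_le_of_lt h2 h3]

theorem interference_fixed_point_unique (M : ℕ)
    (J : (Fin M → ℝ) → (Fin M → ℝ))
    (hpos : ∀ x : Fin M → ℝ, (∀ i, 0 ≤ x i) → ∀ i, 0 < J x i)
    (hscal : ∀ x : Fin M → ℝ, (∀ i, 0 ≤ x i) → ∀ α : ℝ, 1 < α →
      ∀ i, J (fun j => α * x j) i < α * J x i)
    (hmono : ∀ x y : Fin M → ℝ, (∀ i, 0 ≤ y i) → (∀ i, y i ≤ x i) →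
      ∀ i, J y i ≤ J x i)
    (x₁ x₂ : Fin M → ℝ)
    (hx₁ : ∀ i, 0 < x₁ i) (hx₂ : ∀ i, 0 < x₂ i)
    (hf₁ : J x₁ = x₁) (hf₂ : J x₂ = x₂) :
    x₁ = x₂ := by
  funext i
  exact le_antisymm
    (interference_fp_le M J hscal hmono x₁ x₂ hx₁ hx₂ hf₁ hf₂ i)
    (interference_fp_le M J hscal hmono x₂ x₁ hx₂ hx₁ hf₂ hf₁ i)
end

section
/- A standard interference mapping J : (ℝ≥0)^M → (ℝ>0)^M has a fixed point if there exists x' with J(x') ≤ x' componentwise. -/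
theorem interference_fixed_point_exists (M : ℕ)
    (J : (Fin M → ℝ) → (Fin M → ℝ))
    (hpos : ∀ x : Fin M → ℝ, (∀ i, 0 ≤ x i) → ∀ i, 0 < J x i)
    (hscal : ∀ x : Fin M → ℝ, (∀ i, 0 ≤ x i) → ∀ α : ℝ, 1 < α →
      ∀ i, J (fun j => α * x j) i < α * J x i)
    (hmono : ∀ x y : Fin M → ℝ, (∀ i, 0 ≤ y i) → (∀ i, y i ≤ x i) →
      ∀ i, J y i ≤ J x i)
    (x' : Fin M → ℝ) (hx' : ∀ i, 0 ≤ x' i) (hle : ∀ i, J x' i ≤ x' i) :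
    ∃ x : Fin M → ℝ, (∀ i, 0 < x i) ∧ J x = x := by
  have hfact : Fact ((0 : Fin M → ℝ) ≤ x') := ⟨fun i => hx' i⟩
  have hmem : ∀ z : Set.Icc (0 : Fin M → ℝ) x', J z ∈ Set.Icc (0 : Fin M → ℝ) x' := by
    rintro ⟨z, hz0, hzx⟩
    refine ⟨fun i => (hpos z (fun i => hz0 i) i).le, fun i =>
      le_trans (hmono x' z (fun i => hz0 i) (fun i => hzx i) i) (hle i)⟩
  let f : Set.Icc (0 : Fin M → ℝ) x' →o Set.Icc (0 : Fin M → ℝ) x' :=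
    ⟨fun z => ⟨J z, hmem z⟩, by
      rintro ⟨a, ha0, _⟩ ⟨b, _, _⟩ hab i
      exact hmono b a (fun i => ha0 i) (fun i => hab i) i⟩
  have hfix : J (f.lfp : Fin M → ℝ) = (f.lfp : Fin M → ℝ) :=
    congrArg Subtype.val f.map_lfp
  have hx0 := f.lfp.2.1
  exact ⟨f.lfp, fun i => hfix ▸ hpos _ (fun i => hx0 i) i, hfix⟩
end

section
/- If J is a standard interference mapping with a fixed point x*, then the sequence defined by x_{n+1} = J(x_n) with x₁ = 0 is componentwise monotonically increasing and converges to x*. -/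
theorem interference_iteration_from_zero (M : ℕ)
    (J : (Fin M → ℝ) → (Fin M → ℝ))
    (hpos : ∀ x : Fin M → ℝ, (∀ i, 0 ≤ x i) → ∀ i, 0 < J x i)
    (hscal : ∀ x : Fin M → ℝ, (∀ i, 0 ≤ x i) → ∀ α : ℝ, 1 < α →
      ∀ i, J (fun j => α * x j) i < α * J x i)
    (hmono : ∀ x y : Fin M → ℝ, (∀ i, 0 ≤ y i) → (∀ i, y i ≤ x i) →
      ∀ i, J y i ≤ J x i)
    (xs : Fin M → ℝ) (hxs : ∀ i, 0 < xs i) (hfix : J xs = xs) :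
    (∀ n : ℕ, ∀ i, J^[n] (fun _ => (0:ℝ)) i ≤ J^[n+1] (fun _ => (0:ℝ)) i) ∧
    Filter.Tendsto (fun n => J^[n] (fun _ => (0:ℝ))) Filter.atTop (nhds xs) := by
  set z : Fin M → ℝ := fun _ => (0:ℝ) with hz
  set x : ℕ → Fin M → ℝ := fun n => J^[n] z with hxdef
  have hxsucc : ∀ n, x (n+1) = J (x n) := by
    intro n; simp [hxdef, Function.iterate_succ_apply']
  have hxnn : ∀ n i, 0 ≤ x n i := by
    intro n
    induction n with
    | zero => intro i; simp [hxdef, hz]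
    | succ n ih => intro i; rw [hxsucc]; exact (hpos _ ih i).le
  have hstep : ∀ n i, x n i ≤ x (n+1) i := by
    intro n
    induction n with
    | zero =>
      intro i
      rw [hxsucc]
      simpa [hxdef, hz] using (hpos z (fun _ => le_refl 0) i).le
    | succ n ih =>
      intro i
      have := hmono (x (n+1)) (x n) (hxnn n) ih i
      rw [← hxsucc n, ← hxsucc (n+1)] at this
      exact this
  have hle_xs : ∀ n i, x n i ≤ xs i := by
    intro n
    induction n with
    | zero => intro i; simpa [hxdef, hz] using (hxs i).le
    | succ n ih =>
      intro i
      rw [hxsucc]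
      have := hmono xs (x n) (hxnn n) ih i
      rwa [hfix] at this
  have hmon : ∀ i, Monotone fun n => x n i :=
    fun i => monotone_nat_of_le_succ (fun n => hstep n i)
  have hbdd : ∀ i, BddAbove (Set.range fun n => x n i) :=
    fun i => ⟨xs i, by rintro y ⟨n, rfl⟩; exact hle_xs n i⟩
  set L : Fin M → ℝ := fun i => ⨆ n, x n i with hLdef
  have hxleL : ∀ n i, x n i ≤ L i := fun n i => le_ciSup (hbdd i) n
  have htend : ∀ i, Filter.Tendsto (fun n => x n i) Filter.atTop (nhds (L i)) :=
    fun i => tendsto_atTop_ciSup (hmon i) (hbdd i)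
  have hLnn : ∀ i, 0 ≤ L i := fun i => le_trans (hxnn 0 i) (hxleL 0 i)
  have hLpos : ∀ i, 0 < L i := by
    intro i
    have h1 : x 1 i ≤ L i := hxleL 1 i
    have : 0 < x 1 i := by
      rw [hxsucc 0]; exact hpos _ (hxnn 0) i
    linarith
  have hLle_xs : ∀ i, L i ≤ xs i := fun i => ciSup_le (fun n => hle_xs n i)
  -- L ≤ J L
  have hLleJL : ∀ i, L i ≤ J L i := by
    intro i
    refine ciSup_le fun n => ?_
    cases n with
    | zero => simpa [hxdef, hz] using (hpos L hLnn i).le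
    | succ n =>
      rw [hxsucc]
      exact hmono L (x n) (hxnn n) (fun j => hxleL n j) i
  -- J L ≤ L
  have hJLleL : ∀ i, J L i ≤ L i := by
    intro i
    refine le_of_forall_pos_le_add fun ε hε => ?_
    set α : ℝ := 1 + ε / L i with hαdef
    have hα1 : 1 < α := by
      have : 0 < ε / L i := div_pos hε (hLpos i)
      simp [hαdef]; linarith
    have hev : ∀ᶠ n in Filter.atTop, ∀ j, L j ≤ α * x n j := by
      rw [Filter.eventually_all]
      intro j
      have hlt : L j < α * L j := by
        nlinarith [hLpos j]
      have := ((htend j).const_mul α).eventually (eventually_gt_nhds hlt)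
      filter_upwards [this] with n hn using hn.le
    obtain ⟨n, hn⟩ := hev.exists
    have h1 : J L i ≤ J (fun j => α * x n j) i :=
      hmono (fun j => α * x n j) L hLnn (fun j => hn j) i
    have h2 : J (fun j => α * x n j) i < α * J (x n) i :=
      hscal (x n) (hxnn n) α hα1 i
    have h3 : J (x n) i ≤ L i := by
      have := hxleL (n+1) i; rwa [hxsucc] at this
    have h4 : α * J (x n) i ≤ α * L i :=
      mul_le_mul_of_nonneg_left h3 (by linarith)
    have h5 : α * L i = L i + ε := by
      rw [hαdef, add_mul, one_mul, div_mul_cancel₀ ε (hLpos i).ne']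
    linarith
  have hLfix : J L = L := funext fun i => le_antisymm (hJLleL i) (hLleJL i)
  -- uniqueness: L = xs
  have hLeq : L = xs := by
    by_contra h
    have hne : ∃ i, L i ≠ xs i := by
      by_contra h'
      push_neg at h'
      exact h (funext h')
    obtain ⟨i0, hi0⟩ := hne
    have hi0lt : L i0 < xs i0 := lt_of_le_of_ne (hLle_xs i0) hi0
    obtain ⟨i1, -, hmax⟩ := Finset.exists_max_image Finset.univ
      (fun i => xs i / L i) ⟨i0, Finset.mem_univ i0⟩
    set α : ℝ := xs i1 / L i1 with hαdef
    have hα1 : 1 < α := by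
      have h1 : 1 < xs i0 / L i0 := (one_lt_div (hLpos i0)).2 hi0lt
      exact lt_of_lt_of_le h1 (hmax i0 (Finset.mem_univ i0))
    have hαx : ∀ i, xs i ≤ α * L i := by
      intro i
      have := hmax i (Finset.mem_univ i)
      calc xs i = (xs i / L i) * L i := by field_simp [(hLpos i).ne']
        _ ≤ α * L i := mul_le_mul_of_nonneg_right this (hLnn i)
    have h1 : xs i1 ≤ J (fun j => α * L j) i1 := by
      have := hmono (fun j => α * L j) xs (fun i => (hxs i).le) hαx i1
      rwa [hfix] at this
    have h2 : J (fun j => α * L j) i1 < α * J L i1 := hscal L hLnn α hα1 i1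
    rw [hLfix] at h2
    have h3 : α * L i1 = xs i1 := by
      rw [hαdef, div_mul_cancel₀ _ (hLpos i1).ne']
    linarith
  refine ⟨hstep, ?_⟩
  rw [← hLeq]
  rw [tendsto_pi_nhds]
  exact htend
end

section
/- Every concave function I : (ℝ≥0)^M → ℝ>0 is a standard interference function; i.e., it is monotone (x₁ ≥ x₂ implies I(x₁) ≥ I(x₂)) and scalable (α·I(x) > I(α·x) for all α > 1 and x ∈ (ℝ≥0)^M). -/
theorem concave_positive_is_interference (M : ℕ) (I : (Fin M → ℝ) → ℝ)
    (hconc : ConcaveOn ℝ {x : Fin M → ℝ | ∀ i, 0 ≤ x i} I)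
    (hpos : ∀ x : Fin M → ℝ, (∀ i, 0 ≤ x i) → 0 < I x) :
    (∀ x₁ x₂ : Fin M → ℝ, (∀ i, 0 ≤ x₂ i) → (∀ i, x₂ i ≤ x₁ i) →
      I x₂ ≤ I x₁) ∧
    (∀ x : Fin M → ℝ, (∀ i, 0 ≤ x i) → ∀ α : ℝ, 1 < α →
      I (fun j => α * x j) < α * I x) := by
  constructor
  · intro x₁ x₂ h2 hle
    by_contra hc
    push_neg at hc
    have h1 : ∀ i, 0 ≤ x₁ i := fun i => le_trans (h2 i) (hle i)
    have hI1 : 0 < I x₁ := hpos x₁ h1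
    have hI2 : 0 < I x₂ := hpos x₂ h2
    have hgap : 0 < I x₂ - I x₁ := by linarith
    set t : ℝ := 2 * I x₂ / (I x₂ - I x₁) with ht
    have htpos : 0 < t := div_pos (by linarith) hgap
    have ht1 : 1 < t := by
      rw [ht, lt_div_iff₀ hgap]; linarith
    set y : Fin M → ℝ := fun i => (1 - t) * x₂ i + t * x₁ i with hy
    have hymem : y ∈ {x : Fin M → ℝ | ∀ i, 0 ≤ x i} := by
      intro i
      have hyi : y i = x₂ i + t * (x₁ i - x₂ i) := by simp only [hy]; ring
      rw [hyi]
      have := sub_nonneg.mpr (hle i)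
      nlinarith [h2 i]
    have hIy : 0 < I y := hpos y hymem
    have htinv : t * (I x₂ - I x₁) = 2 * I x₂ := by
      rw [ht]; field_simp
    have hcomb : (1/t) • y + (1 - 1/t) • x₂ = x₁ := by
      funext i
      simp only [hy, Pi.add_apply, Pi.smul_apply, smul_eq_mul]
      field_simp
      ring
    have key := hconc.2 hymem h2 (show (0:ℝ) ≤ 1/t by positivity)
      (show (0:ℝ) ≤ 1 - 1/t by
        have : 1/t < 1 := by rw [div_lt_one htpos]; exact ht1
        linarith)
      (by ring)
    rw [hcomb] at key
    simp only [smul_eq_mul] at key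
    have hu : 0 < 1/t := by positivity
    have hut : (1/t) * t = 1 := by field_simp
    nlinarith [mul_pos hu hIy, mul_pos htpos hgap]
  · intro x hx α hα
    have h0 : (fun _ : Fin M => (0:ℝ)) ∈ {x : Fin M → ℝ | ∀ i, 0 ≤ x i} := fun i => le_refl 0
    have hαx : (fun j => α * x j) ∈ {x : Fin M → ℝ | ∀ i, 0 ≤ x i} := by
      intro i; have := hx i; positivity
    have hI0 : 0 < I (fun _ => 0) := hpos _ h0
    have hαpos : 0 < α := by linarith
    have hcomb : (1/α) • (fun j => α * x j) + (1 - 1/α) • (fun _ : Fin M => (0:ℝ)) = x := by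
      funext i
      simp only [Pi.add_apply, Pi.smul_apply, smul_eq_mul]
      field_simp
      ring
    have key := hconc.2 hαx h0 (show (0:ℝ) ≤ 1/α by positivity)
      (show (0:ℝ) ≤ 1 - 1/α by
        have : 1/α < 1 := by rw [div_lt_one hαpos]; exact hα
        linarith)
      (by ring)
    rw [hcomb] at key
    simp only [smul_eq_mul] at key
    have e : α * ((1 / α * I fun j => α * x j) + (1 - 1 / α) * I fun _ => 0)
        = I (fun j => α * x j) + (α - 1) * I (fun _ => 0) := by
      field_simp
    have h := mul_le_mul_of_nonneg_left key hαpos.le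
    rw [e] at h
    have hp : 0 < (α - 1) * I (fun _ => 0) := mul_pos (by linarith) hI0
    linarith
end

section
/- The function f : ℝ>0 → ℝ defined by f(x) = 1 / log₂(1 + 1/x) is concave on the positive reals. -/
open Real Set

private lemma phi_hasDerivAt {s : ℝ} (hs : 0 < s) :
    HasDerivAt (fun u : ℝ => Real.log (1 + u) - 2 * u / (2 + u))
      (1 / (1 + s) - 4 / (2 + s) ^ 2) s := by
  have h1 : (1 : ℝ) + s ≠ 0 := by positivity
  have h2 : (2 : ℝ) + s ≠ 0 := by positivity
  have hlog : HasDerivAt (fun u : ℝ => Real.log (1 + u)) (1 / (1 + s)) s := by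
    have := ((hasDerivAt_id s).const_add 1).log h1
    simpa using this
  have hq := ((hasDerivAt_id s).const_mul 2).div ((hasDerivAt_id s).const_add 2) h2
  simp only [id_eq] at hq
  have hnum : (2 * 1 * (2 + s) - 2 * s * 1) / (2 + s) ^ 2 = 4 / (2 + s) ^ 2 := by ring
  rw [hnum] at hq
  exact hlog.sub hq

private lemma log_lower_bound {t : ℝ} (ht : 0 ≤ t) : 2 * t / (2 + t) ≤ Real.log (1 + t) := by
  set φ : ℝ → ℝ := fun u => Real.log (1 + u) - 2 * u / (2 + u) with hφ
  have hmono : MonotoneOn φ (Ici 0) := by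
    apply monotoneOn_of_deriv_nonneg (convex_Ici 0)
    · apply ContinuousOn.sub
      · apply ContinuousOn.log (by fun_prop)
        intro u hu; simp only [mem_Ici] at hu; positivity
      · apply ContinuousOn.div (by fun_prop) (by fun_prop)
        intro u hu; simp only [mem_Ici] at hu; positivity
    · intro u hu
      rw [interior_Ici] at hu
      exact (phi_hasDerivAt hu).differentiableAt.differentiableWithinAt
    · intro u hu
      rw [interior_Ici] at hu
      have hu' : (0:ℝ) < u := hu
      rw [(phi_hasDerivAt hu').deriv]
      rw [sub_nonneg, div_le_div_iff₀ (by positivity) (by linarith)]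
      nlinarith [sq_nonneg u]
  have h0 : φ 0 = 0 := by simp [hφ]
  have := hmono (self_mem_Ici) ht ht
  rw [h0] at this
  simpa [hφ, sub_nonneg] using this

private lemma g_pos {x : ℝ} (hx : 0 < x) : 0 < Real.log (x + 1) - Real.log x :=
  sub_pos.mpr (Real.log_lt_log hx (by linarith))

private lemma g_hasDerivAt {x : ℝ} (hx : 0 < x) :
    HasDerivAt (fun y : ℝ => Real.log (y + 1) - Real.log y) (1 / (x + 1) - 1 / x) x := by
  have h1 : x + 1 ≠ 0 := by positivity
  have ha : HasDerivAt (fun y : ℝ => Real.log (y + 1)) (1 / (x + 1)) x := by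
    have := ((hasDerivAt_id x).add_const 1).log h1
    simpa using this
  have hb : HasDerivAt Real.log (1 / x) x := by
    simpa [one_div] using Real.hasDerivAt_log hx.ne'
  exact ha.sub hb

private lemma alg1 (L G x : ℝ) (hx : 0 < x) (hG : G ≠ 0) :
    (0 * G - L * (1 / (x + 1) - 1 / x)) / G ^ 2 = L / ((x ^ 2 + x) * G ^ 2) := by
  have h1 : x + 1 ≠ 0 := by positivity
  have h2 : x ≠ 0 := hx.ne'
  field_simp
  try ring
  try tauto

private lemma alg2 (L G x : ℝ) (hx : 0 < x) (hG : G ≠ 0) :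
    (0 * ((x ^ 2 + x) * G ^ 2) -
        L * ((2 * x + 1) * G ^ 2 + (x ^ 2 + x) * (2 * G * (1 / (x + 1) - 1 / x)))) /
      ((x ^ 2 + x) * G ^ 2) ^ 2 =
    -(L * (G * ((2 * x + 1) * G - 2))) / ((x ^ 2 + x) * G ^ 2) ^ 2 := by
  have h1 : x + 1 ≠ 0 := by positivity
  have h2 : x ≠ 0 := hx.ne'
  rw [div_eq_div_iff (by positivity) (by positivity)]
  field_simp
  try ring
  try tauto

theorem concave_inv_log2_one_add_inv :
    ConcaveOn ℝ (Set.Ioi (0:ℝ))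
      (fun x => 1 / (Real.log (1 + 1/x) / Real.log 2)) := by
  set g : ℝ → ℝ := fun y => Real.log (y + 1) - Real.log y with hgdef
  set F : ℝ → ℝ := fun y => Real.log 2 / g y with hFdef
  set F' : ℝ → ℝ := fun y => Real.log 2 / ((y ^ 2 + y) * g y ^ 2) with hF'def
  set F'' : ℝ → ℝ := fun y =>
    -(Real.log 2 * (g y * ((2 * y + 1) * g y - 2))) / ((y ^ 2 + y) * g y ^ 2) ^ 2 with hF''def
  have hfF : ∀ x ∈ Set.Ioi (0:ℝ),
      (fun x => 1 / (Real.log (1 + 1/x) / Real.log 2)) =ᶠ[nhds x] F := by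
    intro x hx
    filter_upwards [isOpen_Ioi.mem_nhds hx] with y hy
    have hy' : (0:ℝ) < y := hy
    have h1 : 1 + 1 / y = (y + 1) / y := by field_simp
    rw [one_div_div, h1, Real.log_div (by positivity) hy'.ne']
  have hint : interior (Set.Ioi (0:ℝ)) = Set.Ioi (0:ℝ) := interior_Ioi
  have hF' : ∀ x ∈ Set.Ioi (0:ℝ), HasDerivAt F (F' x) x := by
    intro x hx
    have hx' : (0:ℝ) < x := hx
    have hg := g_pos hx'
    have hd := (hasDerivAt_const x (Real.log 2)).div (g_hasDerivAt hx') hg.ne'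
    rw [alg1 (Real.log 2) _ x hx' hg.ne'] at hd
    exact hd
  have hF'' : ∀ x ∈ Set.Ioi (0:ℝ), HasDerivAt F' (F'' x) x := by
    intro x hx
    have hx' : (0:ℝ) < x := hx
    have hg := g_pos hx'
    have hH : HasDerivAt (fun y => (y ^ 2 + y) * g y ^ 2)
        ((2 * x + 1) * g x ^ 2 + (x ^ 2 + x) * (2 * g x * (1 / (x + 1) - 1 / x))) x := by
      have hp : HasDerivAt (fun y : ℝ => y ^ 2 + y) (2 * x + 1) x := by
        have := (hasDerivAt_pow 2 x).add (hasDerivAt_id x)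
        norm_num at this
        exact this
      have hq : HasDerivAt (fun y => g y ^ 2) (2 * g x * (1 / (x + 1) - 1 / x)) x := by
        have := (g_hasDerivAt hx').fun_pow 2
        norm_num at this
        simp only [one_div]
        exact this
      have := hp.fun_mul hq
      convert this using 1
      try ring
    have hHne : (x ^ 2 + x) * g x ^ 2 ≠ 0 := by positivity
    have hd := (hasDerivAt_const x (Real.log 2)).div hH hHne
    rw [alg2 (Real.log 2) _ x hx' hg.ne'] at hd
    exact hd
  have hF''le : ∀ x ∈ Set.Ioi (0:ℝ), F'' x ≤ 0 := by
    intro x hx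
    have hx' : (0:ℝ) < x := hx
    have hg := g_pos hx'
    have hkey : 2 ≤ (2 * x + 1) * g x := by
      have ht : (0:ℝ) ≤ 1 / x := by positivity
      have hlb := log_lower_bound ht
      have h1 : 1 + 1 / x = (x + 1) / x := by field_simp
      rw [h1, Real.log_div (by positivity) hx'.ne'] at hlb
      have h2 : 2 * (1 / x) / (2 + 1 / x) = 2 / (2 * x + 1) := by
        rw [div_eq_div_iff (by positivity) (by positivity)]
        field_simp
        try ring
        try tauto
      rw [h2, div_le_iff₀ (by positivity)] at hlb
      rw [mul_comm]
      exact hlb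
    rw [hF''def]
    apply div_nonpos_of_nonpos_of_nonneg _ (by positivity)
    rw [neg_nonpos]
    have h2 : (0:ℝ) ≤ (2 * x + 1) * g x - 2 := by linarith
    have hL : (0:ℝ) < Real.log 2 := Real.log_pos (by norm_num)
    positivity
  apply concaveOn_of_hasDerivWithinAt2_nonpos (convex_Ioi 0) (f' := F') (f'' := F'')
  · intro x hx
    exact ((hF' x hx).congr_of_eventuallyEq (hfF x hx)).continuousAt.continuousWithinAt
  · intro x hx
    rw [hint] at hx ⊢
    exact ((hF' x hx).congr_of_eventuallyEq (hfF x hx)).hasDerivWithinAt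
  · intro x hx
    rw [hint] at hx ⊢
    exact (hF'' x hx).hasDerivWithinAt
  · intro x hx
    rw [hint] at hx
    exact hF''le x hx
end

section
/- For fixed constants g > 0, σ² > 0, B > 0, d > 0, K > 0, and nonnegative weights ν_k g_k ≥ 0, the function of (p_{-i}, y) ∈ (ℝ>0)^{M-1} × ℝ>0 given by d / (B·K·log₂(1 + g/(Σ_k ν_k p_k g_k + y))) is concave. -/
open Set Real

/-- Key inequality: `2t ≤ (2+t) log(1+t)` for `t ≥ 0`. -/
lemma two_mul_le_log_ineq : ∀ t : ℝ, 0 ≤ t → 2 * t ≤ (2 + t) * Real.log (1 + t) := by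
  have hmono : MonotoneOn (fun t : ℝ => (2 + t) * Real.log (1 + t) - 2 * t) (Ici 0) := by
    apply monotoneOn_of_deriv_nonneg (convex_Ici 0)
    · apply ContinuousOn.sub
      · exact (continuousOn_const.add continuousOn_id).mul
          ((continuousOn_const.add continuousOn_id).log (by
            intro x hx; simp only [mem_Ici] at hx; show (1:ℝ) + x ≠ 0; positivity))
      · exact continuousOn_const.mul continuousOn_id
    · intro x hx
      rw [interior_Ici] at hx
      have h1 : (0:ℝ) < 1 + x := by simp only [mem_Ioi] at hx; linarith
      have hd := (((hasDerivAt_const x 2).add (hasDerivAt_id x)).mul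
          (((hasDerivAt_const x 1).add (hasDerivAt_id x)).log h1.ne')).sub
          ((hasDerivAt_const x 2).mul (hasDerivAt_id x))
      exact hd.differentiableAt.differentiableWithinAt
    · intro x hx
      rw [interior_Ici] at hx
      have hx' : (0:ℝ) < x := hx
      have h1 : (0:ℝ) < 1 + x := by linarith
      have hd := (((hasDerivAt_const x 2).add (hasDerivAt_id x)).mul
          (((hasDerivAt_const x 1).add (hasDerivAt_id x)).log h1.ne')).sub
          ((hasDerivAt_const x 2).mul (hasDerivAt_id x))
      simp only [id_eq] at hd
      rw [HasDerivAt.deriv (f := fun t : ℝ => (2 + t) * Real.log (1 + t) - 2 * t) hd]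
      simp only [Pi.add_apply, id_eq, zero_add, one_mul, zero_mul, mul_one, add_zero]
      have hlog : 1 - (1 + x)⁻¹ ≤ Real.log (1 + x) := Real.one_sub_inv_le_log_of_pos h1
      have heq1 : 1 - (1 + x)⁻¹ = x / (1 + x) := by field_simp; ring
      rw [heq1] at hlog
      have h2 : (2 + x) * (1 / (1 + x)) = 2 - x / (1 + x) := by field_simp; ring
      rw [h2]
      linarith
  intro t ht
  have := hmono (self_mem_Ici) ht ht
  simp only [Real.log_one, add_zero, mul_zero, mul_comm] at this
  nlinarith [this]

/-- Concavity of `x ↦ (log(x+g) - log x)⁻¹` on `(0, ∞)`. -/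
lemma concave_inv_logdiff (g : ℝ) (hg : 0 < g) :
    ConcaveOn ℝ (Ioi (0:ℝ)) (fun x => (Real.log (x + g) - Real.log x)⁻¹) := by
  set h : ℝ → ℝ := fun x => (Real.log (x + g) - Real.log x)⁻¹ with hh
  set u : ℝ → ℝ := fun x => Real.log (x + g) - Real.log x with hu
  have hupos : ∀ x ∈ Ioi (0:ℝ), 0 < u x := by
    intro x hx
    have hx' : (0:ℝ) < x := hx
    have : Real.log x < Real.log (x + g) := Real.log_lt_log hx' (by linarith)
    simpa [hu, sub_pos] using this
  have hud : ∀ x ∈ Ioi (0:ℝ), HasDerivAt u ((x + g)⁻¹ - x⁻¹) x := by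
    intro x hx
    have hx' : (0:ℝ) < x := hx
    have h1 : HasDerivAt (fun y : ℝ => Real.log (y + g)) (1 / (x + g)) x := by
      simpa using ((hasDerivAt_id x).add_const g).log (by positivity)
    have h2 : HasDerivAt Real.log x⁻¹ x := Real.hasDerivAt_log hx'.ne'
    exact (h1.sub h2).congr_deriv (by rw [one_div])
  have hhd : ∀ x ∈ Ioi (0:ℝ), HasDerivAt h (-((x + g)⁻¹ - x⁻¹) / (u x) ^ 2) x := by
    intro x hx
    exact (hud x hx).inv (hupos x hx).ne'
  set F : ℝ → ℝ := fun x => -((x + g)⁻¹ - x⁻¹) / (u x) ^ 2 with hF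
  have hderiv_eq : ∀ x ∈ Ioi (0:ℝ), deriv h =ᶠ[nhds x] F := by
    intro x hx
    filter_upwards [isOpen_Ioi.mem_nhds hx] with y hy
    exact (hhd y hy).deriv
  have hFd : ∀ x ∈ Ioi (0:ℝ), HasDerivAt F
      (g * (2 * g - (2 * x + g) * u x) / (x ^ 2 * (x + g) ^ 2 * (u x) ^ 3)) x := by
    intro x hx
    have hx' : (0:ℝ) < x := hx
    have hxg : (0:ℝ) < x + g := by linarith
    have hU : 0 < u x := hupos x hx
    have h1 : HasDerivAt (fun y : ℝ => (y + g)⁻¹) (-1 / (x + g) ^ 2) x :=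
      ((hasDerivAt_id x).add_const g).inv hxg.ne'
    have hA : HasDerivAt (fun y : ℝ => -((y + g)⁻¹ - y⁻¹)) (-(-1 / (x + g) ^ 2 - -(x ^ 2)⁻¹)) x :=
      (h1.sub (hasDerivAt_inv hx'.ne')).neg
    have hB : HasDerivAt (fun y : ℝ => ((u y) ^ 2)⁻¹)
        (-(((2:ℕ) : ℝ) * u x ^ (2 - 1) * ((x + g)⁻¹ - x⁻¹)) / ((u x) ^ 2) ^ 2) x :=
      ((hud x hx).pow 2).inv (pow_ne_zero 2 hU.ne')
    have raw : HasDerivAt F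
        (-(-1 / (x + g) ^ 2 - -(x ^ 2)⁻¹) * ((u x) ^ 2)⁻¹ +
          -((x + g)⁻¹ - x⁻¹) *
            (-(((2:ℕ) : ℝ) * u x ^ (2 - 1) * ((x + g)⁻¹ - x⁻¹)) / ((u x) ^ 2) ^ 2)) x :=
      hA.mul hB
    convert raw using 1
    have hU' : u x ≠ 0 := hU.ne'
    field_simp
    ring
  apply concaveOn_of_deriv2_nonpos (convex_Ioi 0)
  · intro x hx
    exact (hhd x hx).continuousAt.continuousWithinAt
  · rw [interior_Ioi]
    intro x hx
    exact (hhd x hx).differentiableAt.differentiableWithinAt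
  · rw [interior_Ioi]
    intro x hx
    have : HasDerivAt (deriv h) _ x := (hFd x hx).congr_of_eventuallyEq (hderiv_eq x hx)
    exact this.differentiableAt.differentiableWithinAt
  · rw [interior_Ioi]
    intro x hx
    have hx' : (0:ℝ) < x := hx
    have hU : 0 < u x := hupos x hx
    have hkey : 2 * g ≤ (2 * x + g) * u x := by
      have ht : 0 ≤ g / x := by positivity
      have hlb := two_mul_le_log_ineq (g / x) ht
      have hux : u x = Real.log (1 + g / x) := by
        rw [show (1:ℝ) + g / x = (x + g) / x by field_simp,
          Real.log_div (by positivity) hx'.ne']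
      rw [← hux] at hlb
      calc 2 * g = x * (2 * (g / x)) := by field_simp
        _ ≤ x * ((2 + g / x) * u x) := mul_le_mul_of_nonneg_left hlb hx'.le
        _ = (2 * x + g) * u x := by field_simp
    have h2 : deriv^[2] h x = deriv (deriv h) x := by
      simp [Function.iterate_succ, Function.iterate_one]
    rw [h2, Filter.EventuallyEq.deriv_eq (hderiv_eq x hx), (hFd x hx).deriv]
    apply div_nonpos_of_nonpos_of_nonneg
    · nlinarith
    · positivity

theorem concave_rate_denominator (M : ℕ) (g B d K σ2 : ℝ)
    (hg : 0 < g) (hB : 0 < B) (hd : 0 < d) (hK : 0 < K) (hσ : 0 < σ2)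
    (ν gk : Fin M → ℝ) (hνg : ∀ k, 0 ≤ ν k * gk k) :
    ConcaveOn ℝ {q : (Fin M → ℝ) × ℝ | (∀ k, 0 < q.1 k) ∧ 0 < q.2}
      (fun q => d / (B * K *
        (Real.log (1 + g / (∑ k, ν k * q.1 k * gk k + q.2)) / Real.log 2))) := by
  set S : Set ((Fin M → ℝ) × ℝ) := {q | (∀ k, 0 < q.1 k) ∧ 0 < q.2} with hS
  set ℓ : ((Fin M → ℝ) × ℝ) →ₗ[ℝ] ℝ :=
    { toFun := fun q => ∑ k, ν k * q.1 k * gk k + q.2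
      map_add' := by
        intro a b
        simp only [Prod.fst_add, Prod.snd_add, Pi.add_apply, mul_add, add_mul,
          Finset.sum_add_distrib]
        ring
      map_smul' := by
        intro c a
        simp only [Prod.smul_fst, Prod.smul_snd, Pi.smul_apply, smul_eq_mul,
          RingHom.id_apply, Finset.mul_sum, mul_add]
        congr 1
        apply Finset.sum_congr rfl
        intro k _
        ring } with hℓ
  have hSconv : Convex ℝ S := by
    have hrw : S = (⋂ k : Fin M, {q : (Fin M → ℝ) × ℝ | 0 < q.1 k}) ∩
        {q : (Fin M → ℝ) × ℝ | 0 < q.2} := by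
      ext q; simp [hS, Set.mem_iInter]
    rw [hrw]
    refine Convex.inter (convex_iInter fun k => ?_) ?_
    · exact convex_halfSpace_gt (IsLinearMap.mk (fun a b => rfl) (fun c a => rfl)) 0
    · exact convex_halfSpace_gt (IsLinearMap.mk (fun a b => rfl) (fun c a => rfl)) 0
  have hLpos : ∀ q ∈ S, 0 < ℓ q := by
    intro q hq
    have h1 : 0 ≤ ∑ k, ν k * q.1 k * gk k := by
      apply Finset.sum_nonneg
      intro k _
      have heq : ν k * q.1 k * gk k = (ν k * gk k) * q.1 k := by ring
      rw [heq]
      exact mul_nonneg (hνg k) (hq.1 k).le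
    have h2 := hq.2
    simp only [hℓ, LinearMap.coe_mk, AddHom.coe_mk]
    linarith
  set c : ℝ := d * Real.log 2 / (B * K) with hc
  have hlog2 : (0:ℝ) < Real.log 2 := Real.log_pos (by norm_num)
  have hc0 : 0 ≤ c := by positivity
  have hcomp : ConcaveOn ℝ (⇑ℓ.toAffineMap ⁻¹' Ioi 0)
      ((c • fun x => (Real.log (x + g) - Real.log x)⁻¹) ∘ ⇑ℓ.toAffineMap) :=
    (((concave_inv_logdiff g hg).smul hc0)).comp_affineMap ℓ.toAffineMap
  have hsub : S ⊆ ⇑ℓ.toAffineMap ⁻¹' Ioi 0 := by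
    intro q hq
    simpa using hLpos q hq
  have hmain := hcomp.subset hsub hSconv
  apply hmain.congr
  intro q hq
  have hL : 0 < ℓ q := hLpos q hq
  have hu : 0 < Real.log (ℓ q + g) - Real.log (ℓ q) :=
    sub_pos.mpr (Real.log_lt_log hL (by linarith))
  have hsum : ∑ k, ν k * q.1 k * gk k + q.2 = ℓ q := rfl
  have hlq : Real.log (1 + g / (∑ k, ν k * q.1 k * gk k + q.2))
      = Real.log (ℓ q + g) - Real.log (ℓ q) := by
    rw [hsum, show (1:ℝ) + g / ℓ q = (ℓ q + g) / ℓ q by field_simp,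
      Real.log_div (by linarith) hL.ne']
  simp only [Function.comp_apply, Pi.smul_apply, smul_eq_mul, LinearMap.coe_toAffineMap]
  rw [hlq, hc]
  field_simp
end

section
/- For each base station i, the function P̃_{ν,i}(p) = (p_i/ν_i) · Σ_{j∈N_i} d_j / (K · B · log₂(1 + p_i g_{i,j} / (Σ_{k≠i} ν_k p_k g_{k,j} + σ²))) is concave on (ℝ>0)^M. -/
open Real Set

lemma phi_deriv (u : ℝ) (hu : 0 < u) :
    HasDerivAt (fun u : ℝ => (u + 1) * Real.log u - 2 * (u - 1))
      (Real.log u + (u + 1) * u⁻¹ - 2) u := by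
  have h1 : HasDerivAt (fun u : ℝ => u + 1) 1 u := (hasDerivAt_id u).add_const 1
  have h2 := Real.hasDerivAt_log hu.ne'
  have h3 : HasDerivAt (fun u : ℝ => 2 * (u - 1)) 2 u := by
    simpa using ((hasDerivAt_id u).sub_const 1).const_mul 2
  have := (h1.mul h2).sub h3
  exact this.congr_deriv (by ring)

lemma log_lower (x : ℝ) (hx : 0 < x) : 1 - x⁻¹ ≤ Real.log x := by
  have := Real.log_le_sub_one_of_pos (inv_pos.2 hx)
  rw [Real.log_inv] at this
  linarith

lemma key_log_ineq : ∀ u : ℝ, 1 ≤ u → 2 * (u - 1) ≤ (u + 1) * Real.log u := by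
  have hmono : MonotoneOn (fun u : ℝ => (u + 1) * Real.log u - 2 * (u - 1)) (Ici 1) := by
    apply monotoneOn_of_deriv_nonneg (convex_Ici 1)
    · fun_prop (disch := intro x hx; simp at hx; positivity)
    · intro x hx
      rw [interior_Ici] at hx
      exact (phi_deriv x (by linarith [mem_Ioi.1 hx])).differentiableAt.differentiableWithinAt
    · intro x hx
      rw [interior_Ici, mem_Ioi] at hx
      have hx0 : (0:ℝ) < x := by linarith
      rw [(phi_deriv x hx0).deriv]
      have h1 : (x + 1) * x⁻¹ = 1 + x⁻¹ := by field_simp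
      have h2 := log_lower x hx0
      rw [h1]; linarith
  intro u hu
  have := hmono (self_mem_Ici) hu hu
  simp at this
  linarith

noncomputable def fR (t : ℝ) : ℝ := t / Real.log (1 + t)

noncomputable def phiR (t : ℝ) : ℝ :=
  (1 * Real.log (1 + t) - t * (1 + t)⁻¹) / (Real.log (1 + t)) ^ 2

lemma hL_pos {t : ℝ} (ht : 0 < t) : 0 < Real.log (1 + t) :=
  Real.log_pos (by linarith)

lemma hasDerivAt_L {t : ℝ} (ht : 0 < t) :
    HasDerivAt (fun t : ℝ => Real.log (1 + t)) (1 + t)⁻¹ t := by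
  have h1 : HasDerivAt (fun t : ℝ => 1 + t) 1 t := (hasDerivAt_id t).const_add 1
  exact ((Real.hasDerivAt_log (by linarith : (1:ℝ) + t ≠ 0)).comp t h1).congr_deriv (by ring)

lemma hasDerivAt_fR {t : ℝ} (ht : 0 < t) : HasDerivAt fR (phiR t) t := by
  exact (hasDerivAt_id t).div (hasDerivAt_L ht) (hL_pos ht).ne'

lemma hasDerivAt_phiR {t : ℝ} (ht : 0 < t) :
    HasDerivAt phiR
      ((((1:ℝ) * (1 + t)⁻¹ - (1 * (1 + t)⁻¹ + t * (-1 / (1 + t) ^ 2))) * (Real.log (1 + t)) ^ 2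
        - (1 * Real.log (1 + t) - t * (1 + t)⁻¹) * (2 * Real.log (1 + t) ^ 1 * (1 + t)⁻¹))
        / ((Real.log (1 + t)) ^ 2) ^ 2) t := by
  have h1t : (1:ℝ) + t ≠ 0 := by linarith
  have hL := hasDerivAt_L ht
  have hinv : HasDerivAt (fun t : ℝ => (1 + t)⁻¹) (-1 / (1 + t) ^ 2) t := by
    exact ((hasDerivAt_id t).const_add 1).inv h1t
  have hN : HasDerivAt (fun t : ℝ => 1 * Real.log (1 + t) - t * (1 + t)⁻¹)
      (1 * (1 + t)⁻¹ - (1 * (1 + t)⁻¹ + t * (-1 / (1 + t) ^ 2))) t :=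
    (hL.const_mul 1).sub ((hasDerivAt_id t).mul hinv)
  have hD : HasDerivAt (fun t : ℝ => (Real.log (1 + t)) ^ 2)
      (2 * Real.log (1 + t) ^ 1 * (1 + t)⁻¹) t := hL.pow 2
  exact hN.div hD (pow_ne_zero 2 (hL_pos ht).ne')

lemma fR_concave : ConcaveOn ℝ (Ioi (0:ℝ)) fR := by
  have hderiv : ∀ x ∈ Ioi (0:ℝ), deriv fR x = phiR x := fun x hx =>
    (hasDerivAt_fR hx).deriv
  have hEv : ∀ x ∈ Ioi (0:ℝ), deriv fR =ᶠ[nhds x] phiR := fun x hx =>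
    Filter.eventually_of_mem (Ioi_mem_nhds hx) hderiv
  apply concaveOn_of_deriv2_nonpos' (convex_Ioi 0)
  · exact fun x hx => (hasDerivAt_fR hx).differentiableAt.differentiableWithinAt
  · intro x hx
    exact ((hasDerivAt_phiR hx).differentiableAt.congr_of_eventuallyEq
      (hEv x hx)).differentiableWithinAt
  · intro x hx
    have hx' : (0:ℝ) < x := hx
    have hL := hL_pos hx'
    have h1t : (0:ℝ) < 1 + x := by linarith
    have e1 : deriv^[2] fR x = deriv phiR x := by
      simp only [Function.iterate_succ, Function.iterate_zero, Function.comp_apply, id]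
      exact (hEv x hx).deriv_eq
    rw [e1, (hasDerivAt_phiR hx').deriv]
    have key := key_log_ineq (1 + x) (by linarith)
    set L := Real.log (1 + x) with hLdef
    have hclean : (((1:ℝ) * (1 + x)⁻¹ - (1 * (1 + x)⁻¹ + x * (-1 / (1 + x) ^ 2))) * L ^ 2
        - (1 * L - x * (1 + x)⁻¹) * (2 * L ^ 1 * (1 + x)⁻¹)) / (L ^ 2) ^ 2
        = (2 * x - (2 + x) * L) / ((1 + x) ^ 2 * L ^ 3) := by
      field_simp
      ring
    rw [hclean]
    apply div_nonpos_of_nonpos_of_nonneg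
    · nlinarith
    · positivity

lemma persp {x1 y1 x2 y2 a b : ℝ} (hx1 : 0 < x1) (hy1 : 0 < y1) (hx2 : 0 < x2)
    (hy2 : 0 < y2) (ha : 0 ≤ a) (hb : 0 ≤ b) (hab : a + b = 1) :
    a * (x1 / Real.log (1 + x1 / y1)) + b * (x2 / Real.log (1 + x2 / y2)) ≤
      (a * x1 + b * x2) / Real.log (1 + (a * x1 + b * x2) / (a * y1 + b * y2)) := by
  have hy : 0 < a * y1 + b * y2 := by
    rcases ha.eq_or_lt with h|h
    · have hb1 : b = 1 := by linarith
      rw [← h, hb1]; simpa using hy2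
    · nlinarith [mul_pos h hy1, mul_nonneg hb hy2.le]
  set y := a * y1 + b * y2 with hydef
  have hrw : ∀ x0 y0 : ℝ, 0 < y0 → y0 * fR (x0 / y0) = x0 / Real.log (1 + x0 / y0) := by
    intro x0 y0 h; rw [fR, ← mul_div_assoc, mul_div_cancel₀ _ h.ne']
  have ht1 : x1 / y1 ∈ Ioi (0:ℝ) := div_pos hx1 hy1
  have ht2 : x2 / y2 ∈ Ioi (0:ℝ) := div_pos hx2 hy2
  have ha' : 0 ≤ a * y1 / y := by positivity
  have hb' : 0 ≤ b * y2 / y := by positivity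
  have hab' : a * y1 / y + b * y2 / y = 1 := by
    rw [← add_div]; exact div_self hy.ne'
  have hcon := fR_concave.2 ht1 ht2 ha' hb' hab'
  simp only [smul_eq_mul] at hcon
  have hmix : a * y1 / y * (x1 / y1) + b * y2 / y * (x2 / y2) = (a * x1 + b * x2) / y := by
    field_simp
  rw [hmix] at hcon
  have hmul := mul_le_mul_of_nonneg_left hcon hy.le
  have hLHS : y * (a * y1 / y * fR (x1 / y1) + b * y2 / y * fR (x2 / y2))
      = a * (x1 / Real.log (1 + x1 / y1)) + b * (x2 / Real.log (1 + x2 / y2)) := by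
    rw [← hrw x1 y1 hy1, ← hrw x2 y2 hy2]
    field_simp
  rw [hLHS, hrw _ y hy] at hmul
  exact hmul

theorem power_function_concave (M N : ℕ) (i : Fin M)
    (Ni : Finset (Fin N)) (d : Fin N → ℝ) (g : Fin M → Fin N → ℝ)
    (ν : Fin M → ℝ) (B K σ2 : ℝ)
    (hν : ∀ k, 0 < ν k) (hd : ∀ j, 0 < d j) (hg : ∀ k j, 0 < g k j)
    (hB : 0 < B) (hK : 0 < K) (hσ : 0 < σ2) :
    ConcaveOn ℝ {p : Fin M → ℝ | ∀ k, 0 < p k}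
      (fun p => (p i / ν i) * ∑ j ∈ Ni, d j / (K * B *
        (Real.log (1 + p i * g i j /
          (∑ k ∈ Finset.univ.erase i, ν k * p k * g k j + σ2)) / Real.log 2))) := by
  have hlog2 : (0:ℝ) < Real.log 2 := Real.log_pos one_lt_two
  have hS : Convex ℝ {p : Fin M → ℝ | ∀ k, 0 < p k} := by
    have he : {p : Fin M → ℝ | ∀ k, 0 < p k} = Set.pi Set.univ (fun _ => Ioi (0:ℝ)) := by
      ext p; simp [Set.mem_pi]
    rw [he]; exact convex_pi fun _ _ => convex_Ioi 0
  have hYpos : ∀ (r : Fin M → ℝ), (∀ k, 0 < r k) → ∀ j : Fin N,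
      0 < ∑ k ∈ Finset.univ.erase i, ν k * r k * g k j + σ2 := by
    intro r hr j
    have h0 : 0 ≤ ∑ k ∈ Finset.univ.erase i, ν k * r k * g k j :=
      Finset.sum_nonneg fun k _ => (mul_pos (mul_pos (hν k) (hr k)) (hg k j)).le
    linarith
  have hkey : ∀ r : Fin M → ℝ,
      (r i / ν i) * ∑ j ∈ Ni, d j / (K * B *
        (Real.log (1 + r i * g i j /
          (∑ k ∈ Finset.univ.erase i, ν k * r k * g k j + σ2)) / Real.log 2))
      = ∑ j ∈ Ni, (d j * Real.log 2 / (ν i * K * B * g i j)) *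
          ((r i * g i j) / Real.log (1 + r i * g i j /
            (∑ k ∈ Finset.univ.erase i, ν k * r k * g k j + σ2))) := by
    intro r
    rw [Finset.mul_sum]
    refine Finset.sum_congr rfl fun j _ => ?_
    set L := Real.log (1 + r i * g i j /
      (∑ k ∈ Finset.univ.erase i, ν k * r k * g k j + σ2)) with hLdef
    rcases eq_or_ne L 0 with hL | hL
    · simp [hL]
    · have h1 : ν i ≠ 0 := (hν i).ne'
      have h2 : K ≠ 0 := hK.ne'
      have h3 : B ≠ 0 := hB.ne'
      have h4 : g i j ≠ 0 := (hg i j).ne'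
      have h5 : Real.log 2 ≠ 0 := hlog2.ne'
      field_simp
  refine ⟨hS, ?_⟩
  intro p hp q hq a b ha hb hab
  simp only [Set.mem_setOf_eq] at hp hq
  have hmix : ∀ k, 0 < (a • p + b • q) k := hS hp hq ha hb hab
  simp only [smul_eq_mul]
  rw [hkey p, hkey q, hkey (a • p + b • q)]
  rw [Finset.mul_sum, Finset.mul_sum, ← Finset.sum_add_distrib]
  refine Finset.sum_le_sum fun j _ => ?_
  have hXmix : (a • p + b • q) i * g i j = a * (p i * g i j) + b * (q i * g i j) := by
    simp only [Pi.add_apply, Pi.smul_apply, smul_eq_mul]; ring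
  have hYmix : ∑ k ∈ Finset.univ.erase i, ν k * (a • p + b • q) k * g k j + σ2
      = a * (∑ k ∈ Finset.univ.erase i, ν k * p k * g k j + σ2)
        + b * (∑ k ∈ Finset.univ.erase i, ν k * q k * g k j + σ2) := by
    have hterm : ∀ k ∈ Finset.univ.erase i, ν k * (a • p + b • q) k * g k j
        = a * (ν k * p k * g k j) + b * (ν k * q k * g k j) := by
      intro k _; simp only [Pi.add_apply, Pi.smul_apply, smul_eq_mul]; ring
    rw [Finset.sum_congr rfl hterm, Finset.sum_add_distrib, ← Finset.mul_sum, ← Finset.mul_sum]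
    linear_combination (-σ2) * hab
  rw [hXmix, hYmix]
  have hc : 0 ≤ d j * Real.log 2 / (ν i * K * B * g i j) := by
    have := hd j; have := hν i; have := hg i j; positivity
  have hper := persp (mul_pos (hp i) (hg i j)) (hYpos p hp j)
    (mul_pos (hq i) (hg i j)) (hYpos q hq j) ha hb hab
  have h2 := mul_le_mul_of_nonneg_left hper hc
  linarith [h2]
end

section
/- Suppose p' ∈ (ℝ>0)^M is a fixed point of the mapping P_{ν'} (i.e., p' induces load ν'), and let ν'' ≥ ν' componentwise with ν'' ≠ ν'. Define α_i = ν''_i/ν'_i ≥ 1 and p_i = p'_i/α_i. Then P_{ν'',i}(p) ≤ p_i for every i, with strict inequality exactly for those i with α_i > 1. -/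
/-- Component `i` of the power interference mapping `P_ν` (on strictly
positive power vectors, where the closed-form expression applies). -/
noncomputable def Pfun (M N : ℕ) (Ni : Fin M → Finset (Fin N))
    (d : Fin N → ℝ) (g : Fin M → Fin N → ℝ) (B K σ2 : ℝ)
    (ν : Fin M → ℝ) (i : Fin M) (p : Fin M → ℝ) : ℝ :=
  (p i / ν i) * ∑ j ∈ Ni i, d j / (K * B *
    (Real.log (1 + p i * g i j /
      (∑ k ∈ Finset.univ.erase i, ν k * p k * g k j + σ2)) / Real.log 2))

private lemma log_key_lt {s α : ℝ} (hs : 0 < s) (hα : 1 < α) :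
    Real.log (1 + s) < α * Real.log (1 + s / α) := by
  have hα0 : 0 < α := lt_trans one_pos hα
  have hb : 0 < 1 / α := by positivity
  have ha : 0 < 1 - 1 / α := by
    have : 1 / α < 1 := by rw [div_lt_one hα0]; exact hα
    linarith
  have hcc := strictConcaveOn_log_Ioi.2 (Set.mem_Ioi.2 one_pos)
    (Set.mem_Ioi.2 (by linarith : (0:ℝ) < 1 + s))
    (by intro h; nlinarith [h] : (1:ℝ) ≠ 1 + s)
    ha hb (by ring)
  simp only [smul_eq_mul, Real.log_one, mul_zero, zero_add] at hcc
  have heq : (1 - 1 / α) * 1 + (1 / α) * (1 + s) = 1 + s / α := by field_simp; ring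
  rw [heq] at hcc
  calc Real.log (1 + s) = α * ((1 / α) * Real.log (1 + s)) := by field_simp
    _ < α * Real.log (1 + s / α) := (mul_lt_mul_iff_right₀ hα0).2 hcc

private lemma log_key_le {s α : ℝ} (hs : 0 < s) (hα : 1 ≤ α) :
    Real.log (1 + s) ≤ α * Real.log (1 + s / α) := by
  rcases eq_or_lt_of_le hα with h | h
  · rw [← h]; simp
  · exact (log_key_lt hs h).le

private lemma term_le {dj C s α : ℝ} (hd : 0 < dj) (hC : 0 < C) (hs : 0 < s) (hα : 1 ≤ α) :
    dj / (C * Real.log (1 + s / α)) ≤ α * (dj / (C * Real.log (1 + s))) := by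
  have hα0 : 0 < α := lt_of_lt_of_le one_pos hα
  have hsα : 0 < s / α := div_pos hs hα0
  have hY : 0 < Real.log (1 + s / α) := Real.log_pos (by linarith)
  have hX : 0 < Real.log (1 + s) := Real.log_pos (by linarith)
  have hkey := log_key_le hs hα
  rw [mul_div_assoc', div_le_div_iff₀ (by positivity) (by positivity)]
  nlinarith [mul_le_mul_of_nonneg_left hkey (by positivity : (0:ℝ) ≤ dj * C)]

private lemma term_lt {dj C s α : ℝ} (hd : 0 < dj) (hC : 0 < C) (hs : 0 < s) (hα : 1 < α) :
    dj / (C * Real.log (1 + s / α)) < α * (dj / (C * Real.log (1 + s))) := by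
  have hα0 : 0 < α := lt_trans one_pos hα
  have hsα : 0 < s / α := div_pos hs hα0
  have hY : 0 < Real.log (1 + s / α) := Real.log_pos (by linarith)
  have hX : 0 < Real.log (1 + s) := Real.log_pos (by linarith)
  have hkey := log_key_lt hs hα
  rw [mul_div_assoc', div_lt_div_iff₀ (by positivity) (by positivity)]
  nlinarith [mul_lt_mul_of_pos_left hkey (by positivity : (0:ℝ) < dj * C)]

theorem power_decrease_componentwise (M N : ℕ)
    (Ni : Fin M → Finset (Fin N)) (hNi : ∀ i, (Ni i).Nonempty)
    (d : Fin N → ℝ) (g : Fin M → Fin N → ℝ) (B K σ2 : ℝ)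
    (hd : ∀ j, 0 < d j) (hg : ∀ k j, 0 < g k j)
    (hB : 0 < B) (hK : 0 < K) (hσ : 0 < σ2)
    (ν' ν'' p' : Fin M → ℝ)
    (hν' : ∀ i, 0 < ν' i) (hp' : ∀ i, 0 < p' i)
    (hfix : ∀ i, Pfun M N Ni d g B K σ2 ν' i p' = p' i)
    (hle : ∀ i, ν' i ≤ ν'' i) (hne : ν'' ≠ ν')
    (p : Fin M → ℝ) (hp : ∀ i, p i = p' i * ν' i / ν'' i) :
    ∀ i, Pfun M N Ni d g B K σ2 ν'' i p ≤ p i ∧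
      (Pfun M N Ni d g B K σ2 ν'' i p < p i ↔ ν' i < ν'' i) := by
  have hL0 : (0:ℝ) < Real.log 2 := Real.log_pos one_lt_two
  intro i
  have hν''pos : ∀ k, 0 < ν'' k := fun k => lt_of_lt_of_le (hν' k) (hle k)
  have hpi : 0 < p i := by
    rw [hp i]
    exact div_pos (mul_pos (hp' i) (hν' i)) (hν''pos i)
  set C : ℝ := K * B / Real.log 2 with hCdef
  have hC0 : 0 < C := by positivity
  set α : ℝ := ν'' i / ν' i with hαdef
  have hα1 : 1 ≤ α := (one_le_div (hν' i)).2 (hle i)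
  have hα0 : 0 < α := lt_of_lt_of_le one_pos hα1
  have hαν : α * ν' i = ν'' i := div_mul_cancel₀ _ (hν' i).ne'
  -- interference term equality
  have hint : ∀ j, (∑ k ∈ Finset.univ.erase i, ν'' k * p k * g k j) =
      ∑ k ∈ Finset.univ.erase i, ν' k * p' k * g k j := by
    intro j
    refine Finset.sum_congr rfl fun k _ => ?_
    have hk : ν'' k * (p' k * ν' k / ν'' k) = ν' k * p' k := by
      field_simp [(hν''pos k).ne']
    rw [hp k, hk]
  set I : Fin N → ℝ := fun j => ∑ k ∈ Finset.univ.erase i, ν' k * p' k * g k j + σ2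
    with hIdef
  have hI0 : ∀ j, 0 < I j := fun j =>
    add_pos_of_nonneg_of_pos (Finset.sum_nonneg fun k _ =>
      mul_nonneg (mul_nonneg (hν' k).le (hp' k).le) (hg k j).le) hσ
  set s : Fin N → ℝ := fun j => p' i * g i j / I j with hsdef
  have hs0 : ∀ j, 0 < s j := fun j => div_pos (mul_pos (hp' i) (hg i j)) (hI0 j)
  -- fixed point gives : ∑ d j / (C * log (1 + s j)) = ν' i
  have hS' : ∑ j ∈ Ni i, d j / (C * Real.log (1 + s j)) = ν' i := by
    have hfixi := hfix i
    unfold Pfun at hfixi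
    have hrw : ∑ j ∈ Ni i, d j / (K * B *
        (Real.log (1 + p' i * g i j /
          (∑ k ∈ Finset.univ.erase i, ν' k * p' k * g k j + σ2)) / Real.log 2)) =
        ∑ j ∈ Ni i, d j / (C * Real.log (1 + s j)) := by
      refine Finset.sum_congr rfl fun j _ => ?_
      rw [hsdef]
      simp only [hIdef]
      rw [hCdef]
      ring_nf
    rw [hrw] at hfixi
    apply mul_left_cancel₀ (div_pos (hp' i) (hν' i)).ne'
    rw [hfixi, div_mul_cancel₀ _ (hν' i).ne']
  -- the sum appearing in the goal
  have hgoal_sum : ∑ j ∈ Ni i, d j / (K * B *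
      (Real.log (1 + p i * g i j /
        (∑ k ∈ Finset.univ.erase i, ν'' k * p k * g k j + σ2)) / Real.log 2)) =
      ∑ j ∈ Ni i, d j / (C * Real.log (1 + s j / α)) := by
    refine Finset.sum_congr rfl fun j _ => ?_
    rw [hint j]
    have harg : p i * g i j / (∑ k ∈ Finset.univ.erase i, ν' k * p' k * g k j + σ2)
        = s j / α := by
      rw [hp i, hsdef, hαdef]
      simp only [hIdef]
      field_simp
    rw [harg, hCdef]
    ring_nf
  have hPeq : Pfun M N Ni d g B K σ2 ν'' i p =
      (p i / ν'' i) * ∑ j ∈ Ni i, d j / (C * Real.log (1 + s j / α)) := by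
    unfold Pfun
    rw [hgoal_sum]
  have hmulν : p i / ν'' i * ν'' i = p i := div_mul_cancel₀ _ (hν''pos i).ne'
  rcases (hle i).lt_or_eq with hlt | heq
  · -- strict case
    have hα1' : 1 < α := (one_lt_div (hν' i)).2 hlt
    have hsum_lt : ∑ j ∈ Ni i, d j / (C * Real.log (1 + s j / α)) < ν'' i := by
      calc ∑ j ∈ Ni i, d j / (C * Real.log (1 + s j / α))
          < ∑ j ∈ Ni i, α * (d j / (C * Real.log (1 + s j))) :=
            Finset.sum_lt_sum_of_nonempty (hNi i)
              (fun j _ => term_lt (hd j) hC0 (hs0 j) hα1')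
        _ = α * ∑ j ∈ Ni i, d j / (C * Real.log (1 + s j)) := by
            rw [Finset.mul_sum]
        _ = ν'' i := by rw [hS', hαν]
    have hP_lt : Pfun M N Ni d g B K σ2 ν'' i p < p i := by
      rw [hPeq]
      calc p i / ν'' i * ∑ j ∈ Ni i, d j / (C * Real.log (1 + s j / α))
          < p i / ν'' i * ν'' i :=
            (mul_lt_mul_iff_right₀ (div_pos hpi (hν''pos i))).2 hsum_lt
        _ = p i := hmulν
    exact ⟨hP_lt.le, iff_of_true hP_lt hlt⟩
  · -- equality case : ν' i = ν'' i, α = 1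
    have hα1'' : α = 1 := by rw [hαdef, ← heq, div_self (hν' i).ne']
    have hP_eq : Pfun M N Ni d g B K σ2 ν'' i p = p i := by
      rw [hPeq, hα1'']
      simp only [div_one]
      rw [hS', heq]
      exact hmulν
    refine ⟨hP_eq.le, iff_of_false ?_ ?_⟩
    · rw [hP_eq]; exact lt_irrefl _
    · rw [heq]; exact lt_irrefl _
end

section
/- Under the assumptions of the previous statement (p' a fixed point of P_{ν'}, ν'' ≥ ν', ν'' ≠ ν'), the mapping P_{ν''} has a unique fixed point p'' ∈ (ℝ>0)^M, and p'' satisfies 0 < p'' < p ≤ p' componentwise, where p_i = p'_i · ν'_i/ν''_i. -/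
open Finset

/-- The "inverse rate" function `x / log(1 + c x)`. -/
noncomputable def Tf (x c : ℝ) : ℝ := x / Real.log (1 + c * x)

lemma log_arg_pos {x c : ℝ} (hx : 0 < x) (hc : 0 < c) : 0 < Real.log (1 + c * x) :=
  Real.log_pos (by nlinarith)

lemma Tf_pos {x c : ℝ} (hx : 0 < x) (hc : 0 < c) : 0 < Tf x c :=
  div_pos hx (log_arg_pos hx hc)

/-- Strict Bernoulli-type inequality from strict concavity of `log`. -/
lemma log_bern_strict {a z : ℝ} (ha : 0 < a) (ha1 : a < 1) (hz : 0 < z) :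
    a * Real.log (1 + z) < Real.log (1 + a * z) := by
  have h := strictConcaveOn_log_Ioi.2 (x := 1 + z) (y := 1)
    (by simp only [Set.mem_Ioi]; linarith) (by simp only [Set.mem_Ioi]; norm_num)
    (by intro h; nlinarith [hz])
    ha (by linarith : (0:ℝ) < 1 - a) (by ring)
  have h1 : a • (1 + z) + (1 - a) • (1:ℝ) = 1 + a * z := by
    simp only [smul_eq_mul]; ring
  rw [h1, Real.log_one, smul_eq_mul, smul_eq_mul, mul_zero, add_zero] at h
  exact h

/-- `Tf` is strictly monotone in `x`. -/
lemma Tf_lt_x {x y c : ℝ} (hx : 0 < x) (hxy : x < y) (hc : 0 < c) : Tf x c < Tf y c := by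
  have hy : 0 < y := hx.trans hxy
  have ha : 0 < x / y := div_pos hx hy
  have ha1 : x / y < 1 := (div_lt_one hy).2 hxy
  have hb := log_bern_strict ha ha1 (mul_pos hc hy)
  have hxy' : x / y * (c * y) = c * x := by field_simp
  rw [hxy'] at hb
  have hlogy := log_arg_pos hy hc
  have h2 : 0 < x / y * Real.log (1 + c * y) := mul_pos ha hlogy
  have h3 : Tf x c < x / (x / y * Real.log (1 + c * y)) :=
    div_lt_div_of_pos_left hx h2 hb
  have h4 : x / (x / y * Real.log (1 + c * y)) = Tf y c := by
    unfold Tf; field_simp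
  rw [h4] at h3; exact h3

lemma Tf_le_x {x y c : ℝ} (hx : 0 < x) (hxy : x ≤ y) (hc : 0 < c) : Tf x c ≤ Tf y c := by
  rcases eq_or_lt_of_le hxy with h | h
  · rw [h]
  · exact (Tf_lt_x hx h hc).le

/-- `Tf` is strictly antitone in `c`. -/
lemma Tf_lt_c {x c c' : ℝ} (hx : 0 < x) (hc' : 0 < c') (hcc : c' < c) : Tf x c < Tf x c' := by
  unfold Tf
  have h1 : Real.log (1 + c' * x) < Real.log (1 + c * x) :=
    Real.log_lt_log (by nlinarith) (by nlinarith)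
  exact div_lt_div_of_pos_left hx (log_arg_pos hx hc') h1

lemma Tf_le_c {x c c' : ℝ} (hx : 0 < x) (hc' : 0 < c') (hcc : c' ≤ c) : Tf x c ≤ Tf x c' := by
  rcases eq_or_lt_of_le hcc with h | h
  · rw [h]
  · exact (Tf_lt_c hx hc' h).le

/-- Uniform lower bound `Tf x c ≥ 1/c`. -/
lemma Tf_ge {x c : ℝ} (hx : 0 < x) (hc : 0 < c) : 1 / c ≤ Tf x c := by
  have h1 : Real.log (1 + c * x) ≤ c * x := by
    have := Real.log_le_sub_one_of_pos (show (0:ℝ) < 1 + c * x by nlinarith)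
    linarith
  have h2 : x / (c * x) ≤ Tf x c := by
    unfold Tf
    gcongr
    · exact log_arg_pos hx hc
  rw [show x / (c * x) = 1 / c by field_simp] at h2
  exact h2

/-- Scalability inequality for `Tf`. -/
lemma Tf_scal {x gg IS σ2 α : ℝ} (hx : 0 < x) (hg : 0 < gg) (hIS : 0 ≤ IS)
    (hσ : 0 < σ2) (hα : 1 < α) :
    Tf (α * x) (gg / (α * IS + σ2)) < α * Tf x (gg / (IS + σ2)) := by
  have hd1 : 0 < IS + σ2 := by linarith
  have hd2 : 0 < α * IS + σ2 := by nlinarith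
  have h1 : gg / (IS + σ2) * x < gg / (α * IS + σ2) * (α * x) := by
    rw [div_mul_eq_mul_div, div_mul_eq_mul_div, div_lt_div_iff₀ hd1 hd2]
    nlinarith [mul_pos (mul_pos hg hx) hσ, mul_nonneg (mul_nonneg (mul_nonneg hg.le hx.le) hIS) hσ.le]
  have hc1 : 0 < gg / (IS + σ2) := div_pos hg hd1
  have hl1 : 0 < Real.log (1 + gg / (IS + σ2) * x) := log_arg_pos hx hc1
  have key : Real.log (1 + gg / (IS + σ2) * x) < Real.log (1 + gg / (α * IS + σ2) * (α * x)) :=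
    Real.log_lt_log (by nlinarith) (by linarith)
  unfold Tf
  rw [show α * (x / Real.log (1 + gg / (IS + σ2) * x))
      = α * x / Real.log (1 + gg / (IS + σ2) * x) by ring]
  exact div_lt_div_of_pos_left (by positivity) hl1 key

-- continuation: Pfun-level lemmas (appended after part1 content + Pfun def)
section PfunLemmas

variable {M N : ℕ} {Ni : Fin M → Finset (Fin N)} {d : Fin N → ℝ} {g : Fin M → Fin N → ℝ}
  {B K σ2 : ℝ} {ν : Fin M → ℝ}

/-- Interference sum (without noise). -/
def ISum (g : Fin M → Fin N → ℝ) (ν q : Fin M → ℝ) (i : Fin M) (j : Fin N) : ℝ :=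
  ∑ k ∈ Finset.univ.erase i, ν k * q k * g k j

lemma ISum_nonneg (hν : ∀ k, 0 < ν k) (hg : ∀ k j, 0 < g k j) {q : Fin M → ℝ}
    (hq : ∀ k, 0 < q k) (i : Fin M) (j : Fin N) : 0 ≤ ISum g ν q i j :=
  Finset.sum_nonneg fun k _ => mul_nonneg (mul_nonneg (hν k).le (hq k).le) (hg k j).le

lemma ISum_mono (hν : ∀ k, 0 < ν k) (hg : ∀ k j, 0 < g k j) {q r : Fin M → ℝ}
    (hqr : ∀ k, q k ≤ r k) (i : Fin M) (j : Fin N) : ISum g ν q i j ≤ ISum g ν r i j := by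
  apply Finset.sum_le_sum
  intro k _
  exact mul_le_mul_of_nonneg_right (mul_le_mul_of_nonneg_left (hqr k) (hν k).le) (hg k j).le

/-- Closed form of `Pfun` in terms of `Tf`. -/
lemma Pfun_eq (hB : 0 < B) (hK : 0 < K) (hσ : 0 < σ2) (hν : ∀ k, 0 < ν k)
    (hg : ∀ k j, 0 < g k j) {q : Fin M → ℝ} (hq : ∀ k, 0 < q k) (i : Fin M) :
    Pfun M N Ni d g B K σ2 ν i q
      = (1 / ν i) * ∑ j ∈ Ni i, (d j * Real.log 2 / (K * B)) *
          Tf (q i) (g i j / (ISum g ν q i j + σ2)) := by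
  unfold Pfun Tf ISum
  rw [Finset.mul_sum, Finset.mul_sum]
  refine Finset.sum_congr rfl fun j _ => ?_
  set D := ∑ k ∈ Finset.univ.erase i, ν k * q k * g k j with hD
  have hDpos : 0 < D + σ2 := by
    have : 0 ≤ D := Finset.sum_nonneg fun k _ => mul_nonneg (mul_nonneg (hν k).le (hq k).le) (hg k j).le
    linarith
  have harg : (1 : ℝ) + g i j / (D + σ2) * q i = 1 + q i * g i j / (D + σ2) := by ring
  rw [harg]
  have hlogpos : 0 < Real.log (1 + q i * g i j / (D + σ2)) := by
    apply Real.log_pos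
    have : 0 < q i * g i j / (D + σ2) := div_pos (mul_pos (hq i) (hg i j)) hDpos
    linarith
  have hlog2 : (0:ℝ) < Real.log 2 := Real.log_pos (by norm_num)
  field_simp

lemma Pfun_mono (hB : 0 < B) (hK : 0 < K) (hσ : 0 < σ2) (hd : ∀ j, 0 < d j)
    (hν : ∀ k, 0 < ν k) (hg : ∀ k j, 0 < g k j) {q r : Fin M → ℝ}
    (hq : ∀ k, 0 < q k) (hqr : ∀ k, q k ≤ r k) (i : Fin M) :
    Pfun M N Ni d g B K σ2 ν i q ≤ Pfun M N Ni d g B K σ2 ν i r := by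
  have hr : ∀ k, 0 < r k := fun k => (hq k).trans_le (hqr k)
  rw [Pfun_eq hB hK hσ hν hg hq i, Pfun_eq hB hK hσ hν hg hr i]
  have hlog2 : (0:ℝ) < Real.log 2 := Real.log_pos (by norm_num)
  apply mul_le_mul_of_nonneg_left _ (one_div_pos.2 (hν i)).le
  apply Finset.sum_le_sum
  intro j _
  have hcoeff : 0 ≤ d j * Real.log 2 / (K * B) := (div_pos (mul_pos (hd j) hlog2) (mul_pos hK hB)).le
  apply mul_le_mul_of_nonneg_left _ hcoeff
  have hIq : 0 ≤ ISum g ν q i j := ISum_nonneg hν hg hq i j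
  have hIr : 0 ≤ ISum g ν r i j := ISum_nonneg hν hg hr i j
  have hImono : ISum g ν q i j ≤ ISum g ν r i j := ISum_mono hν hg hqr i j
  have hcr : 0 < g i j / (ISum g ν r i j + σ2) := div_pos (hg i j) (by linarith)
  calc Tf (q i) (g i j / (ISum g ν q i j + σ2))
      ≤ Tf (q i) (g i j / (ISum g ν r i j + σ2)) := by
        apply Tf_le_c (hq i) hcr
        apply div_le_div_of_nonneg_left (hg i j).le (by linarith) _
        linarith
    _ ≤ Tf (r i) (g i j / (ISum g ν r i j + σ2)) := Tf_le_x (hq i) (hqr i) hcr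

/-- Strict monotonicity at index `i` when the vectors agree at `i` but differ elsewhere. -/
lemma Pfun_strict_mono (hNi : ∀ i, (Ni i).Nonempty) (hB : 0 < B) (hK : 0 < K) (hσ : 0 < σ2)
    (hd : ∀ j, 0 < d j) (hν : ∀ k, 0 < ν k) (hg : ∀ k j, 0 < g k j) {q r : Fin M → ℝ}
    (hq : ∀ k, 0 < q k) (hqr : ∀ k, q k ≤ r k) (i : Fin M)
    (hqi : q i = r i) {k₀ : Fin M} (hk₀ : k₀ ≠ i) (hk₀lt : q k₀ < r k₀) :
    Pfun M N Ni d g B K σ2 ν i q < Pfun M N Ni d g B K σ2 ν i r := by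
  have hr : ∀ k, 0 < r k := fun k => (hq k).trans_le (hqr k)
  rw [Pfun_eq hB hK hσ hν hg hq i, Pfun_eq hB hK hσ hν hg hr i]
  have hlog2 : (0:ℝ) < Real.log 2 := Real.log_pos (by norm_num)
  apply mul_lt_mul_of_pos_left _ (one_div_pos.2 (hν i))
  apply Finset.sum_lt_sum_of_nonempty (hNi i)
  intro j _
  have hcoeff : 0 < d j * Real.log 2 / (K * B) := div_pos (mul_pos (hd j) hlog2) (mul_pos hK hB)
  apply mul_lt_mul_of_pos_left _ hcoeff
  have hIq : 0 ≤ ISum g ν q i j := ISum_nonneg hν hg hq i j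
  have hIstrict : ISum g ν q i j < ISum g ν r i j := by
    apply Finset.sum_lt_sum
    · intro k _
      exact mul_le_mul_of_nonneg_right (mul_le_mul_of_nonneg_left (hqr k) (hν k).le) (hg k j).le
    · exact ⟨k₀, Finset.mem_erase.2 ⟨hk₀, Finset.mem_univ _⟩,
        mul_lt_mul_of_pos_right (mul_lt_mul_of_pos_left hk₀lt (hν k₀)) (hg k₀ j)⟩
  have hcr : 0 < g i j / (ISum g ν r i j + σ2) := div_pos (hg i j) (by linarith)
  have hclt : g i j / (ISum g ν r i j + σ2) < g i j / (ISum g ν q i j + σ2) :=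
    div_lt_div_of_pos_left (hg i j) (by linarith) (by linarith)
  have h1 : Tf (q i) (g i j / (ISum g ν q i j + σ2))
      < Tf (q i) (g i j / (ISum g ν r i j + σ2)) := Tf_lt_c (hq i) hcr hclt
  rw [← hqi]
  exact h1

/-- Scalability: `P(α q) < α P(q)` for `α > 1`. -/
lemma Pfun_scal (hNi : ∀ i, (Ni i).Nonempty) (hB : 0 < B) (hK : 0 < K) (hσ : 0 < σ2)
    (hd : ∀ j, 0 < d j) (hν : ∀ k, 0 < ν k) (hg : ∀ k j, 0 < g k j) {q : Fin M → ℝ}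
    (hq : ∀ k, 0 < q k) {α : ℝ} (hα : 1 < α) (i : Fin M) :
    Pfun M N Ni d g B K σ2 ν i (fun k => α * q k) < α * Pfun M N Ni d g B K σ2 ν i q := by
  have hαq : ∀ k, 0 < α * q k := fun k => mul_pos (by linarith) (hq k)
  rw [Pfun_eq hB hK hσ hν hg hαq i, Pfun_eq hB hK hσ hν hg hq i, mul_left_comm]
  have hlog2 : (0:ℝ) < Real.log 2 := Real.log_pos (by norm_num)
  apply mul_lt_mul_of_pos_left _ (one_div_pos.2 (hν i))
  rw [Finset.mul_sum]
  apply Finset.sum_lt_sum_of_nonempty (hNi i)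
  intro j _
  have hcoeff : 0 < d j * Real.log 2 / (K * B) := div_pos (mul_pos (hd j) hlog2) (mul_pos hK hB)
  have hIS : ISum g ν (fun k => α * q k) i j = α * ISum g ν q i j := by
    unfold ISum
    rw [Finset.mul_sum]
    exact Finset.sum_congr rfl fun k _ => by ring
  rw [hIS, mul_left_comm]
  apply mul_lt_mul_of_pos_left _ hcoeff
  exact Tf_scal (hq i) (hg i j) (ISum_nonneg hν hg hq i j) hσ hα

/-- Uniform positive lower bound for `Pfun` on positive vectors. -/
lemma Pfun_lower (hB : 0 < B) (hK : 0 < K) (hσ : 0 < σ2) (hd : ∀ j, 0 < d j)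
    (hν : ∀ k, 0 < ν k) (hg : ∀ k j, 0 < g k j) {q : Fin M → ℝ}
    (hq : ∀ k, 0 < q k) (i : Fin M) :
    (1 / ν i) * ∑ j ∈ Ni i, (d j * Real.log 2 / (K * B)) * (σ2 / g i j)
      ≤ Pfun M N Ni d g B K σ2 ν i q := by
  rw [Pfun_eq hB hK hσ hν hg hq i]
  have hlog2 : (0:ℝ) < Real.log 2 := Real.log_pos (by norm_num)
  apply mul_le_mul_of_nonneg_left _ (one_div_pos.2 (hν i)).le
  apply Finset.sum_le_sum
  intro j _
  have hcoeff : 0 ≤ d j * Real.log 2 / (K * B) := (div_pos (mul_pos (hd j) hlog2) (mul_pos hK hB)).le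
  apply mul_le_mul_of_nonneg_left _ hcoeff
  have hI : 0 ≤ ISum g ν q i j := ISum_nonneg hν hg hq i j
  have hc : 0 < g i j / (ISum g ν q i j + σ2) := div_pos (hg i j) (by linarith)
  calc σ2 / g i j ≤ (ISum g ν q i j + σ2) / g i j := by
        rw [div_le_div_iff₀ (hg i j) (hg i j)]
        nlinarith [mul_nonneg hI (hg i j).le]
    _ = 1 / (g i j / (ISum g ν q i j + σ2)) := by
        rw [one_div_div]
    _ ≤ Tf (q i) (g i j / (ISum g ν q i j + σ2)) := Tf_ge (hq i) hc

end PfunLemmas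

theorem new_fixed_point_exists_and_bounded (M N : ℕ)
    (Ni : Fin M → Finset (Fin N)) (hNi : ∀ i, (Ni i).Nonempty)
    (d : Fin N → ℝ) (g : Fin M → Fin N → ℝ) (B K σ2 : ℝ)
    (hd : ∀ j, 0 < d j) (hg : ∀ k j, 0 < g k j)
    (hB : 0 < B) (hK : 0 < K) (hσ : 0 < σ2)
    (ν' ν'' p' : Fin M → ℝ)
    (hν' : ∀ i, 0 < ν' i) (hp' : ∀ i, 0 < p' i)
    (hfix : ∀ i, Pfun M N Ni d g B K σ2 ν' i p' = p' i)
    (hle : ∀ i, ν' i ≤ ν'' i) (hne : ν'' ≠ ν')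
    (p : Fin M → ℝ) (hp : ∀ i, p i = p' i * ν' i / ν'' i) :
    ∃ p'' : Fin M → ℝ,
      ((∀ i, 0 < p'' i) ∧ (∀ i, Pfun M N Ni d g B K σ2 ν'' i p'' = p'' i)) ∧
      (∀ q : Fin M → ℝ, (∀ i, 0 < q i) →
        (∀ i, Pfun M N Ni d g B K σ2 ν'' i q = q i) → q = p'') ∧
      (∀ i, 0 < p'' i ∧ p'' i < p i ∧ p i ≤ p' i) := by
  classical
  have hν'' : ∀ i, 0 < ν'' i := fun i => (hν' i).trans_le (hle i)
  have hlog2 : (0:ℝ) < Real.log 2 := Real.log_pos (by norm_num)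
  have hppos : ∀ i, 0 < p i := fun i => by
    rw [hp i]; exact div_pos (mul_pos (hp' i) (hν' i)) (hν'' i)
  have hple : ∀ i, p i ≤ p' i := fun i => by
    rw [hp i, div_le_iff₀ (hν'' i)]
    nlinarith [hp' i, hle i, hν' i]
  obtain ⟨i₀, hi₀⟩ : ∃ i, ν' i < ν'' i := by
    by_contra h
    push_neg at h
    exact hne (funext fun i => le_antisymm (h i) (hle i))
  have hpi₀ : p i₀ < p' i₀ := by
    rw [hp i₀, div_lt_iff₀ (hν'' i₀)]
    nlinarith [hp' i₀]
  -- the interference products agree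
  have hIeq : ∀ k, ν'' k * p k = ν' k * p' k := fun k => by
    rw [hp k]; field_simp [(hν'' k).ne']
  have hISeq : ∀ i j, ISum g ν'' p i j = ISum g ν' p' i j := fun i j =>
    Finset.sum_congr rfl fun k _ => by rw [hIeq k]
  -- rewrite the fixed-point equations for p'
  have hfix' : ∀ i, (1 / ν' i) * ∑ j ∈ Ni i, (d j * Real.log 2 / (K * B)) *
      Tf (p' i) (g i j / (ISum g ν' p' i j + σ2)) = p' i := fun i => by
    rw [← Pfun_eq hB hK hσ hν' hg hp' i]; exact hfix i
  -- feasibility: Pfun ν'' p ≤ p, strict at i₀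
  have key : ∀ i, Pfun M N Ni d g B K σ2 ν'' i p
      = (1 / ν'' i) * ∑ j ∈ Ni i, (d j * Real.log 2 / (K * B)) *
          Tf (p i) (g i j / (ISum g ν' p' i j + σ2)) := fun i => by
    rw [Pfun_eq hB hK hσ hν'' hg hppos i]
    congr 1
    refine Finset.sum_congr rfl fun j _ => ?_
    rw [hISeq i j]
  have hSum_le : ∀ i, (∑ j ∈ Ni i, (d j * Real.log 2 / (K * B)) *
      Tf (p i) (g i j / (ISum g ν' p' i j + σ2)))
      ≤ ∑ j ∈ Ni i, (d j * Real.log 2 / (K * B)) *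
          Tf (p' i) (g i j / (ISum g ν' p' i j + σ2)) := by
    intro i
    apply Finset.sum_le_sum
    intro j _
    have hI' : 0 ≤ ISum g ν' p' i j := ISum_nonneg hν' hg hp' i j
    have hc : 0 < g i j / (ISum g ν' p' i j + σ2) := div_pos (hg i j) (by linarith)
    exact mul_le_mul_of_nonneg_left (Tf_le_x (hppos i) (hple i) hc)
      (div_pos (mul_pos (hd j) hlog2) (mul_pos hK hB)).le
  have hpval : ∀ i, (1 / ν'' i) * (ν' i * p' i) = p i := fun i => by
    rw [hp i]; field_simp
  have hSval : ∀ i, (∑ j ∈ Ni i, (d j * Real.log 2 / (K * B)) *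
      Tf (p' i) (g i j / (ISum g ν' p' i j + σ2))) = ν' i * p' i := fun i => by
    have h := hfix' i
    calc (∑ j ∈ Ni i, (d j * Real.log 2 / (K * B)) *
        Tf (p' i) (g i j / (ISum g ν' p' i j + σ2)))
        = ν' i * ((1 / ν' i) * ∑ j ∈ Ni i, (d j * Real.log 2 / (K * B)) *
            Tf (p' i) (g i j / (ISum g ν' p' i j + σ2))) := by
          rw [← mul_assoc, mul_one_div, div_self (hν' i).ne', one_mul]
      _ = ν' i * p' i := by rw [h]
  have hfeas : ∀ i, Pfun M N Ni d g B K σ2 ν'' i p ≤ p i := by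
    intro i
    rw [key i]
    calc (1 / ν'' i) * ∑ j ∈ Ni i, (d j * Real.log 2 / (K * B)) *
          Tf (p i) (g i j / (ISum g ν' p' i j + σ2))
        ≤ (1 / ν'' i) * ∑ j ∈ Ni i, (d j * Real.log 2 / (K * B)) *
          Tf (p' i) (g i j / (ISum g ν' p' i j + σ2)) :=
          mul_le_mul_of_nonneg_left (hSum_le i) (one_div_pos.2 (hν'' i)).le
      _ = (1 / ν'' i) * (ν' i * p' i) := by rw [hSval i]
      _ = p i := hpval i
  have hfeas_strict : Pfun M N Ni d g B K σ2 ν'' i₀ p < p i₀ := by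
    rw [key i₀]
    have hsum : (∑ j ∈ Ni i₀, (d j * Real.log 2 / (K * B)) *
        Tf (p i₀) (g i₀ j / (ISum g ν' p' i₀ j + σ2)))
        < ∑ j ∈ Ni i₀, (d j * Real.log 2 / (K * B)) *
          Tf (p' i₀) (g i₀ j / (ISum g ν' p' i₀ j + σ2)) := by
      apply Finset.sum_lt_sum_of_nonempty (hNi i₀)
      intro j _
      have hI' : 0 ≤ ISum g ν' p' i₀ j := ISum_nonneg hν' hg hp' i₀ j
      have hc : 0 < g i₀ j / (ISum g ν' p' i₀ j + σ2) := div_pos (hg i₀ j) (by linarith)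
      exact mul_lt_mul_of_pos_left (Tf_lt_x (hppos i₀) hpi₀ hc)
        (div_pos (mul_pos (hd j) hlog2) (mul_pos hK hB))
    calc (1 / ν'' i₀) * ∑ j ∈ Ni i₀, (d j * Real.log 2 / (K * B)) *
          Tf (p i₀) (g i₀ j / (ISum g ν' p' i₀ j + σ2))
        < (1 / ν'' i₀) * ∑ j ∈ Ni i₀, (d j * Real.log 2 / (K * B)) *
          Tf (p' i₀) (g i₀ j / (ISum g ν' p' i₀ j + σ2)) :=
          mul_lt_mul_of_pos_left hsum (one_div_pos.2 (hν'' i₀))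
      _ = (1 / ν'' i₀) * (ν' i₀ * p' i₀) := by rw [hSval i₀]
      _ = p i₀ := hpval i₀
  -- the uniform lower bound vector
  set lo : Fin M → ℝ := fun i =>
    (1 / ν'' i) * ∑ j ∈ Ni i, (d j * Real.log 2 / (K * B)) * (σ2 / g i j) with hlo_def
  have hlopos : ∀ i, 0 < lo i := by
    intro i
    apply mul_pos (one_div_pos.2 (hν'' i))
    apply Finset.sum_pos _ (hNi i)
    intro j _
    exact mul_pos (div_pos (mul_pos (hd j) hlog2) (mul_pos hK hB)) (div_pos hσ (hg i j))
  have hlow : ∀ (q : Fin M → ℝ), (∀ k, 0 < q k) → ∀ i,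
      lo i ≤ Pfun M N Ni d g B K σ2 ν'' i q := fun q hq i =>
    Pfun_lower hB hK hσ hd hν'' hg hq i
  have hlole : ∀ i, lo i ≤ p i := fun i => (hlow p hppos i).trans (hfeas i)
  -- Knaster–Tarski on Icc lo p
  haveI : Fact ((lo : Fin M → ℝ) ≤ p) := ⟨fun i => hlole i⟩
  let F : Set.Icc lo p →o Set.Icc lo p :=
    { toFun := fun q => ⟨fun i => Pfun M N Ni d g B K σ2 ν'' i q.1,
        ⟨fun i => hlow q.1 (fun k => (hlopos k).trans_le (q.2.1 k)) i,
         fun i => (Pfun_mono hB hK hσ hd hν'' hg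
            (fun k => (hlopos k).trans_le (q.2.1 k)) (fun k => q.2.2 k) i).trans (hfeas i)⟩⟩
      monotone' := by
        intro q r hqr i
        exact Pfun_mono hB hK hσ hd hν'' hg
          (fun k => (hlopos k).trans_le (q.2.1 k)) (fun k => hqr k) i }
  set pfix := OrderHom.lfp F with hpfix
  have hfixF : F pfix = pfix := OrderHom.map_lfp F
  set p'' : Fin M → ℝ := pfix.1 with hp''def
  have hfix'' : ∀ i, Pfun M N Ni d g B K σ2 ν'' i p'' = p'' i := fun i =>
    congrFun (congrArg Subtype.val hfixF) i
  have hp''mem : p'' ∈ Set.Icc lo p := pfix.2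
  have hp''pos : ∀ i, 0 < p'' i := fun i => (hlopos i).trans_le (hp''mem.1 i)
  have hp''le : ∀ i, p'' i ≤ p i := fun i => hp''mem.2 i
  -- strict upper bound
  have hp''lt : ∀ i, p'' i < p i := by
    have hnoeq : ¬ ∃ i, p'' i = p i := by
      rintro ⟨i, hi⟩
      have heq : p'' = p := by
        funext k
        by_contra hk
        have hklt : p'' k < p k := lt_of_le_of_ne (hp''le k) hk
        have hki : k ≠ i := by rintro rfl; exact hk hi
        have hstrict := Pfun_strict_mono hNi hB hK hσ hd hν'' hg hp''pos hp''le i hi hki hklt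
        rw [hfix'' i] at hstrict
        exact absurd (hfeas i) (not_le.2 (hi ▸ hstrict))
      have h1 := hfix'' i₀
      rw [heq] at h1
      rw [h1] at hfeas_strict
      exact lt_irrefl _ hfeas_strict
    intro i
    exact lt_of_le_of_ne (hp''le i) fun h => hnoeq ⟨i, h⟩
  -- uniqueness: any positive fixed point equals any other
  have huniq_le : ∀ q r : Fin M → ℝ, (∀ k, 0 < q k) → (∀ k, 0 < r k) →
      (∀ i, Pfun M N Ni d g B K σ2 ν'' i q = q i) →
      (∀ i, Pfun M N Ni d g B K σ2 ν'' i r = r i) → ∀ k, q k ≤ r k := by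
    intro q r hq hr hfq hfr
    by_contra hcon
    push_neg at hcon
    obtain ⟨k₀, hk₀⟩ := hcon
    obtain ⟨i₁, -, hi₁⟩ := Finset.exists_max_image Finset.univ (fun k => q k / r k)
      ⟨i₀, Finset.mem_univ _⟩
    set α := q i₁ / r i₁ with hα_def
    have hα1 : 1 < α :=
      lt_of_lt_of_le ((one_lt_div (hr k₀)).2 hk₀) (hi₁ k₀ (Finset.mem_univ _))
    have hqle : ∀ k, q k ≤ α * r k := by
      intro k
      have h := hi₁ k (Finset.mem_univ _)
      calc q k = q k / r k * r k := (div_mul_cancel₀ (q k) (hr k).ne').symm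
        _ ≤ α * r k := mul_le_mul_of_nonneg_right h (hr k).le
    have h1 : Pfun M N Ni d g B K σ2 ν'' i₁ q ≤
        Pfun M N Ni d g B K σ2 ν'' i₁ (fun k => α * r k) :=
      Pfun_mono hB hK hσ hd hν'' hg hq hqle i₁
    have h2 := Pfun_scal hNi hB hK hσ hd hν'' hg hr hα1 i₁
    rw [hfq i₁] at h1
    rw [hfr i₁] at h2
    have hαr : α * r i₁ = q i₁ := by
      rw [hα_def]
      exact div_mul_cancel₀ (q i₁) (hr i₁).ne'
    have := lt_of_le_of_lt h1 h2
    rw [hαr] at this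
    exact lt_irrefl _ this
  refine ⟨p'', ⟨hp''pos, hfix''⟩, ?_, fun i => ⟨hp''pos i, hp''lt i, hple i⟩⟩
  intro q hqpos hqfix
  funext k
  exact le_antisymm (huniq_le q p'' hqpos hp''pos hqfix hfix'' k)
    (huniq_le p'' q hp''pos hqpos hfix'' hqfix k)
end

section
/- Let J be a standard interference mapping with fixed point x*, and let u₁ = 0 and v₁ satisfy J(v₁) ≤ v₁. Define u_{n+1} = J(u_n) and v_{n+1} = J(v_n). Then for every n, u_n ≤ x* ≤ v_n componentwise, so ‖u_n − x*‖_∞ ≤ ‖u_n − v_n‖_∞ and ‖v_n − x*‖_∞ ≤ ‖u_n − v_n‖_∞, and the error bound sequence ε_n = ‖u_n − v_n‖_∞ is monotonically decreasing and converges to 0. -/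
open Filter

lemma brac_key {M : ℕ} (hM : 0 < M) (J : (Fin M → ℝ) → (Fin M → ℝ))
    (hscal : ∀ x : Fin M → ℝ, (∀ i, 0 ≤ x i) → ∀ α : ℝ, 1 < α →
      ∀ i, J (fun j => α * x j) i < α * J x i)
    (hmono : ∀ x y : Fin M → ℝ, (∀ i, 0 ≤ y i) → (∀ i, y i ≤ x i) →
      ∀ i, J y i ≤ J x i)
    (x y : Fin M → ℝ) (hx : ∀ i, 0 < x i) (hfx : ∀ i, J x i = x i)
    (hy : ∀ i, 0 < y i) (hjy : ∀ i, J y i ≤ y i) : ∀ i, x i ≤ y i := by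
  have hne : (Finset.univ : Finset (Fin M)).Nonempty := ⟨⟨0, hM⟩, Finset.mem_univ _⟩
  obtain ⟨i₀, -, hi₀⟩ := Finset.exists_max_image Finset.univ (fun i => x i / y i) hne
  set α := x i₀ / y i₀ with hαdef
  by_cases hα : α ≤ 1
  · intro i
    have h := hi₀ i (Finset.mem_univ i)
    exact (div_le_one (hy i)).mp (le_trans h hα)
  · push_neg at hα
    have hle : ∀ i, x i ≤ α * y i := by
      intro i
      have h := hi₀ i (Finset.mem_univ i)
      rw [div_le_iff₀ (hy i)] at h
      linarith [h]
    have h1 : x i₀ ≤ J (fun j => α * y j) i₀ := by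
      rw [← hfx i₀]
      exact hmono _ x (fun i => (hx i).le) hle i₀
    have h2 : J (fun j => α * y j) i₀ < α * J y i₀ :=
      hscal y (fun i => (hy i).le) α hα i₀
    have h3 : α * J y i₀ ≤ α * y i₀ :=
      mul_le_mul_of_nonneg_left (hjy i₀) (by linarith)
    have h4 : α * y i₀ = x i₀ := div_mul_cancel₀ _ (hy i₀).ne'
    intro i; exfalso; linarith

theorem bracketing_algorithm_correct (M : ℕ)
    (J : (Fin M → ℝ) → (Fin M → ℝ))
    (hpos : ∀ x : Fin M → ℝ, (∀ i, 0 ≤ x i) → ∀ i, 0 < J x i)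
    (hscal : ∀ x : Fin M → ℝ, (∀ i, 0 ≤ x i) → ∀ α : ℝ, 1 < α →
      ∀ i, J (fun j => α * x j) i < α * J x i)
    (hmono : ∀ x y : Fin M → ℝ, (∀ i, 0 ≤ y i) → (∀ i, y i ≤ x i) →
      ∀ i, J y i ≤ J x i)
    (xs : Fin M → ℝ) (hxs : ∀ i, 0 < xs i) (hfix : J xs = xs)
    (v₁ : Fin M → ℝ) (hv₁ : ∀ i, 0 ≤ v₁ i) (hv₁le : ∀ i, J v₁ i ≤ v₁ i) :
    (∀ n : ℕ, ∀ i, J^[n] (fun _ => (0:ℝ)) i ≤ xs i ∧ xs i ≤ J^[n] v₁ i) ∧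
    (∀ n : ℕ,
      ‖J^[n] (fun _ => (0:ℝ)) - xs‖ ≤ ‖J^[n] (fun _ => (0:ℝ)) - J^[n] v₁‖ ∧
      ‖J^[n] v₁ - xs‖ ≤ ‖J^[n] (fun _ => (0:ℝ)) - J^[n] v₁‖) ∧
    Antitone (fun n : ℕ => ‖J^[n] (fun _ => (0:ℝ)) - J^[n] v₁‖) ∧
    Filter.Tendsto (fun n : ℕ => ‖J^[n] (fun _ => (0:ℝ)) - J^[n] v₁‖)
      Filter.atTop (nhds 0) := by
  rcases Nat.eq_zero_or_pos M with hM | hM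
  · subst hM
    have hz : ∀ f g : Fin 0 → ℝ, ‖f - g‖ = 0 := by
      intro f g
      have : f - g = 0 := funext fun i => i.elim0
      rw [this, norm_zero]
    refine ⟨fun n i => i.elim0, fun n => ?_, ?_, ?_⟩
    · constructor <;> simp only [hz] <;> exact le_refl 0
    · intro a b _; simp only [hz]; exact le_rfl
    · simp only [hz]; exact tendsto_const_nhds
  -- main case
  have u : True := trivial
  set U : ℕ → Fin M → ℝ := fun n => J^[n] (fun _ => (0:ℝ)) with hUdef
  set V : ℕ → Fin M → ℝ := fun n => J^[n] v₁ with hVdef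
  have hus : ∀ n, U (n+1) = J (U n) := fun n => Function.iterate_succ_apply' J n _
  have hvs : ∀ n, V (n+1) = J (V n) := fun n => Function.iterate_succ_apply' J n _
  have hu0 : ∀ i, U 0 i = 0 := fun i => rfl
  have hv0 : V 0 = v₁ := rfl
  have hfx : ∀ i, J xs i = xs i := fun i => congrFun hfix i
  have hunn : ∀ n i, 0 ≤ U n i := by
    intro n
    induction n with
    | zero => intro i; rw [hu0]
    | succ n ih => intro i; rw [hus]; exact (hpos _ ih i).le
  have huxs : ∀ n i, U n i ≤ xs i := by
    intro n
    induction n with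
    | zero => intro i; rw [hu0]; exact (hxs i).le
    | succ n ih =>
      intro i; rw [hus]
      have := hmono xs (U n) (hunn n) ih i
      rwa [hfx i] at this
  have humono : ∀ n i, U n i ≤ U (n+1) i := by
    intro n
    induction n with
    | zero => intro i; rw [hu0, hus]; exact (hpos _ (hunn 0) i).le
    | succ n ih =>
      intro i; rw [hus n, hus (n+1)]
      exact hmono (U (n+1)) (U n) (hunn n) ih i
  have hvnn : ∀ n i, 0 ≤ V n i := by
    intro n
    induction n with
    | zero => exact hv₁
    | succ n ih => intro i; rw [hvs]; exact (hpos _ ih i).le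
  have hxsv1 : ∀ i, xs i ≤ v₁ i :=
    brac_key hM J hscal hmono xs v₁ hxs hfx
      (fun i => lt_of_lt_of_le (hpos v₁ hv₁ i) (hv₁le i)) hv₁le
  have hxsv : ∀ n i, xs i ≤ V n i := by
    intro n
    induction n with
    | zero => exact hxsv1
    | succ n ih =>
      intro i; rw [hvs]
      have := hmono (V n) xs (fun j => (hxs j).le) ih i
      rwa [hfx i] at this
  have hvanti : ∀ n i, V (n+1) i ≤ V n i := by
    intro n
    induction n with
    | zero => intro i; rw [hvs]; exact hv₁le i
    | succ n ih =>
      intro i; rw [hvs n, hvs (n+1)]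
      exact hmono (V n) (V (n+1)) (hvnn (n+1)) ih i
  have hnorm : ∀ f g : Fin M → ℝ, (∀ i, |f i| ≤ |g i|) → ‖f‖ ≤ ‖g‖ := by
    intro f g h
    rw [pi_norm_le_iff_of_nonneg (norm_nonneg g)]
    intro i
    calc ‖f i‖ = |f i| := rfl
      _ ≤ |g i| := h i
      _ = ‖g i‖ := rfl
      _ ≤ ‖g‖ := norm_le_pi_norm g i
  -- limits
  have hbddu : ∀ i, BddAbove (Set.range fun n => U n i) := by
    intro i; exact ⟨xs i, by rintro _ ⟨n, rfl⟩; exact huxs n i⟩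
  have huL : ∀ i, Tendsto (fun n => U n i) atTop (nhds (⨆ n, U n i)) := fun i =>
    tendsto_atTop_ciSup (monotone_nat_of_le_succ (fun n => humono n i)) (hbddu i)
  set L : Fin M → ℝ := fun i => ⨆ n, U n i with hLdef
  have hunL : ∀ n i, U n i ≤ L i := fun n i => le_ciSup (hbddu i) n
  have hLxs : ∀ i, L i ≤ xs i := fun i => ciSup_le (fun n => huxs n i)
  have hLpos : ∀ i, 0 < L i := by
    intro i
    have h1 : 0 < U 1 i := by rw [hus 0]; exact hpos _ (hunn 0) i
    exact lt_of_lt_of_le h1 (hunL 1 i)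
  have hL1 : ∀ i, L i ≤ J L i := by
    intro i
    apply ciSup_le
    intro n
    cases n with
    | zero => rw [hu0]; exact (hpos L (fun j => (hLpos j).le) i).le
    | succ n =>
      rw [hus]
      exact hmono L (U n) (hunn n) (fun j => hunL n j) i
  have hL2 : ∀ i, J L i ≤ L i := by
    intro i
    by_contra hcon
    push_neg at hcon
    have key : ∀ α : ℝ, 1 < α → J L i < α * L i := by
      intro α hα
      have hev : ∀ᶠ n in atTop, ∀ j, L j / α < U n j := by
        rw [eventually_all]
        intro j
        exact (huL j).eventually (eventually_gt_nhds (div_lt_self (hLpos j) hα))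
      obtain ⟨n, hn⟩ := hev.exists
      have hle : ∀ j, L j ≤ α * U n j := by
        intro j
        have := (div_lt_iff₀ (by linarith : (0:ℝ) < α)).mp (hn j)
        linarith [this]
      calc J L i ≤ J (fun j => α * U n j) i := hmono _ L (fun j => (hLpos j).le) hle i
        _ < α * J (U n) i := hscal (U n) (hunn n) α hα i
        _ = α * U (n+1) i := by rw [hus]
        _ ≤ α * L i := mul_le_mul_of_nonneg_left (hunL (n+1) i) (by linarith)
    have hα : 1 < J L i / L i := (one_lt_div (hLpos i)).mpr hcon
    have h := key _ hα
    rw [div_mul_cancel₀ _ (hLpos i).ne'] at h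
    exact lt_irrefl _ h
  have hLeq : ∀ i, L i = xs i := by
    have h1 : ∀ i, xs i ≤ L i :=
      brac_key hM J hscal hmono xs L hxs hfx hLpos (fun i => hL2 i)
    exact fun i => le_antisymm (hLxs i) (h1 i)
  -- inf side
  have hbddv : ∀ i, BddBelow (Set.range fun n => V n i) := by
    intro i; exact ⟨xs i, by rintro _ ⟨n, rfl⟩; exact hxsv n i⟩
  have hvL : ∀ i, Tendsto (fun n => V n i) atTop (nhds (⨅ n, V n i)) := fun i =>
    tendsto_atTop_ciInf (antitone_nat_of_succ_le (fun n => hvanti n i)) (hbddv i)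
  set W : Fin M → ℝ := fun i => ⨅ n, V n i with hWdef
  have hWvn : ∀ n i, W i ≤ V n i := fun n i => ciInf_le (hbddv i) n
  have hxsW : ∀ i, xs i ≤ W i := fun i => le_ciInf (fun n => hxsv n i)
  have hWpos : ∀ i, 0 < W i := fun i => lt_of_lt_of_le (hxs i) (hxsW i)
  have hW2 : ∀ i, J W i ≤ W i := by
    intro i
    apply le_ciInf
    intro n
    have hsucc : ∀ m, J W i ≤ V (m+1) i := by
      intro m
      rw [hvs]
      exact hmono (V m) W (fun j => (hWpos j).le) (fun j => hWvn m j) i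
    cases n with
    | zero => exact le_trans (hsucc 0) (hvanti 0 i)
    | succ m => exact hsucc m
  have hW1 : ∀ i, W i ≤ J W i := by
    intro i
    by_contra hcon
    push_neg at hcon
    have hJWpos : 0 < J W i := hpos W (fun j => (hWpos j).le) i
    have key : ∀ α : ℝ, 1 < α → W i < α * J W i := by
      intro α hα
      have hev : ∀ᶠ n in atTop, ∀ j, V n j < α * W j := by
        rw [eventually_all]
        intro j
        exact (hvL j).eventually (eventually_lt_nhds (lt_mul_of_one_lt_left (hWpos j) hα))
      obtain ⟨n, hn⟩ := hev.exists
      calc W i ≤ V (n+1) i := hWvn (n+1) i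
        _ = J (V n) i := by rw [hvs]
        _ ≤ J (fun j => α * W j) i := hmono _ (V n) (hvnn n) (fun j => (hn j).le) i
        _ < α * J W i := hscal W (fun j => (hWpos j).le) α hα i
    have hα : 1 < W i / J W i := (one_lt_div hJWpos).mpr hcon
    have h := key _ hα
    rw [div_mul_cancel₀ _ hJWpos.ne'] at h
    exact lt_irrefl _ h
  have hWeq : ∀ i, W i = xs i := by
    have h1 : ∀ i, W i ≤ xs i :=
      brac_key hM J hscal hmono W xs hWpos (fun i => le_antisymm (hW2 i) (hW1 i)) hxs
        (fun i => (hfx i).le)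
    exact fun i => le_antisymm (h1 i) (hxsW i)
  -- assemble
  refine ⟨fun n i => ⟨huxs n i, hxsv n i⟩, ?_, ?_, ?_⟩
  · intro n
    constructor
    · apply hnorm
      intro i
      simp only [Pi.sub_apply]
      have h1 := huxs n i
      have h2 := hxsv n i
      rw [abs_of_nonpos (by linarith), abs_of_nonpos (by linarith)]
      linarith
    · apply hnorm
      intro i
      simp only [Pi.sub_apply]
      have h1 := huxs n i
      have h2 := hxsv n i
      rw [abs_of_nonneg (by linarith), abs_of_nonpos (by linarith)]
      linarith
  · apply antitone_nat_of_succ_le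
    intro n
    apply hnorm
    intro i
    simp only [Pi.sub_apply]
    have h1 := huxs n i
    have h2 := hxsv n i
    have h3 := huxs (n+1) i
    have h4 := hxsv (n+1) i
    have h5 := humono n i
    have h6 := hvanti n i
    rw [abs_of_nonpos (by linarith), abs_of_nonpos (by linarith)]
    linarith
  · have hsub : Tendsto (fun n => U n - V n) atTop (nhds 0) := by
      rw [tendsto_pi_nhds]
      intro i
      have h := (huL i).sub (hvL i)
      have e : (⨆ n, U n i) - ⨅ n, V n i = 0 := by
        show L i - W i = 0
        rw [hLeq i, hWeq i]; ring
      rw [e] at h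
      simp only [Pi.sub_apply, Pi.zero_apply]
      exact h
    have h := hsub.norm
    rwa [norm_zero] at h
end
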